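/- arXiv:2404.02232 — 5 statements merged into one kernel-verified Lean document; each statement's English description precedes it below -/
import Mathlib

section
/- Let f : Σ* → ℕ be a star-free ℕ-polyregular function. Then there exists s ≥ 1 such that for every pumping pattern q : ℕ^p → Σ*, there exists a natural binomial function F : ℕ^p → ℕ with f(q(x₁+s, …, x_p+s)) = F(x₁,…,x_p) for all (x₁,…,x_p) ∈ ℕ^p. -/
open scoped BigOperators Classical

namespace NRatSeries

/-- All ways to split a word into a prefix and a suffix. -/
def splits {A : Type} (w : List A) : List (List A × List A) :=
  (List.range (w.length + 1)).map (fun i => (w.take i, w.drop i))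

/-- All decompositions of `w` into `n` (possibly empty) consecutive factors. -/
def decomps {A : Type} : ℕ → List A → List (List (List A))
  | 0, w => if w.isEmpty then [[]] else []
  | n+1, w => (splits w).flatMap (fun p => (decomps n p.2).map (fun l => p.1 :: l))

/-- The data defining a (ℤ-valued) polyregular computation of degree `d`:
a finite monoid `M`, a monoid morphism `μ` from words to `M`,
and a production function `π`. -/
structure PolyRegData (A : Type) (d : ℕ) where
  M : Type
  [mon : Monoid M]
  [fin : Fintype M]
  μ : List A → M
  π : (Fin (d + 1) → M) → ℤ
  map_nil : μ [] = 1
  map_append : ∀ u v : List A, μ (u ++ v) = μ u * μ v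

attribute [instance] PolyRegData.mon PolyRegData.fin

/-- `D` computes `f` if `f w` is the sum, over all decompositions of `w`
into `d+1` factors, of `π` applied to the images of the factors under `μ`. -/
def PolyRegData.Computes {A : Type} {d : ℕ} (D : PolyRegData A d) (f : List A → ℤ) : Prop :=
  ∀ w : List A,
    f w = ((decomps (d + 1) w).map (fun l => D.π (fun i => D.μ (l.getD i [])))).sum

/-- The production function takes values in ℕ. -/
def PolyRegData.NatOutput {A : Type} {d : ℕ} (D : PolyRegData A d) : Prop :=
  ∀ v, 0 ≤ D.π v

/-- The monoid is aperiodic. -/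
def PolyRegData.AperiodicMonoid {A : Type} {d : ℕ} (D : PolyRegData A d) : Prop :=
  ∀ x : D.M, ∃ n : ℕ, x ^ (n + 1) = x ^ n

/-- ℤ-polyregular of degree at most `d`. -/
def ZPolyD {A : Type} (d : ℕ) (f : List A → ℤ) : Prop :=
  ∃ D : PolyRegData A d, D.Computes f

/-- ℕ-polyregular of degree at most `d`. -/
def NPolyD {A : Type} (d : ℕ) (f : List A → ℤ) : Prop :=
  ∃ D : PolyRegData A d, D.Computes f ∧ D.NatOutput

/-- star-free ℤ-polyregular of degree at most `d`. -/
def ZSFD {A : Type} (d : ℕ) (f : List A → ℤ) : Prop :=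
  ∃ D : PolyRegData A d, D.Computes f ∧ D.AperiodicMonoid

/-- star-free ℕ-polyregular of degree at most `d`. -/
def NSFD {A : Type} (d : ℕ) (f : List A → ℤ) : Prop :=
  ∃ D : PolyRegData A d, D.Computes f ∧ D.NatOutput ∧ D.AperiodicMonoid

def ZPoly {A : Type} (f : List A → ℤ) : Prop := ∃ d, ZPolyD d f
def NPoly {A : Type} (f : List A → ℤ) : Prop := ∃ d, NPolyD d f
def ZSF {A : Type} (f : List A → ℤ) : Prop := ∃ d, ZSFD d f
def NSF {A : Type} (f : List A → ℤ) : Prop := ∃ d, NSFD d f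

/-- A function on words is commutative if it is invariant under permutations
of its input, i.e. only depends on the letter counts. -/
def Commutes {A : Type} (f : List A → ℤ) : Prop :=
  ∀ u v : List A, u.Perm v → f u = f v

/-- The word `η 0 ^ (x 0) ⋯ η (k-1) ^ (x (k-1))`. -/
def wordOf {A : Type} {k : ℕ} (η : Fin k → A) (x : Fin k → ℕ) : List A :=
  (List.finRange k).flatMap (fun i => List.replicate (x i) (η i))

/-- `g` represents the polynomial `P`. -/
def Represents {A : Type} {k : ℕ} (g : List A → ℤ) (P : MvPolynomial (Fin k) ℤ) : Prop :=
  ∃ η : Fin k → A, ∀ x : Fin k → ℕ,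
    g (wordOf η x) = MvPolynomial.eval (fun i => (x i : ℤ)) P

/-- `g` represents the rational polynomial `P`. -/
def RepresentsQ {A : Type} {k : ℕ} (g : List A → ℤ) (P : MvPolynomial (Fin k) ℚ) : Prop :=
  ∃ η : Fin k → A, ∀ x : Fin k → ℕ,
    (g (wordOf η x) : ℚ) = MvPolynomial.eval (fun i => (x i : ℚ)) P

/-- `α` is (the exponent vector of) a maximal monomial of `P` for the
divisibility preorder on monomials. -/
def MaxMonomial {k : ℕ} (P : MvPolynomial (Fin k) ℤ) (α : Fin k →₀ ℕ) : Prop :=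
  α ∈ P.support ∧ ∀ β ∈ P.support, α ≤ β → β = α

/-- Partial substitution of natural numbers for some of the variables. -/
noncomputable def restrict {k : ℕ} (ν : Fin k → Option ℕ) (P : MvPolynomial (Fin k) ℤ) :
    MvPolynomial (Fin k) ℤ :=
  MvPolynomial.bind₁
    (fun i => (ν i).elim (MvPolynomial.X i) (fun n => MvPolynomial.C (n : ℤ))) P

noncomputable def restrictQ {k : ℕ} (ν : Fin k → Option ℕ) (P : MvPolynomial (Fin k) ℚ) :
    MvPolynomial (Fin k) ℚ :=
  MvPolynomial.bind₁
    (fun i => (ν i).elim (MvPolynomial.X i) (fun n => MvPolynomial.C (n : ℚ))) P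

/-- `PolyStrNNeg`: every maximal monomial of every partial evaluation of `P`
at natural numbers has a non-negative coefficient. -/
def PolyStrNNeg {k : ℕ} (P : MvPolynomial (Fin k) ℤ) : Prop :=
  ∀ (ν : Fin k → Option ℕ) (α : Fin k →₀ ℕ),
    MaxMonomial (restrict ν P) α → 0 ≤ (restrict ν P).coeff α

/-- The translation `τ_K(P) = P(X₁ + K, …, X_k + K)`. -/
noncomputable def translate {k : ℕ} (K : ℕ) (P : MvPolynomial (Fin k) ℤ) :
    MvPolynomial (Fin k) ℤ :=
  MvPolynomial.bind₁ (fun i => MvPolynomial.X i + MvPolynomial.C (K : ℤ)) P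

/-- The discrete derivative `Δ_K(P) = τ_K(P) - P`. -/
noncomputable def delta {k : ℕ} (K : ℕ) (P : MvPolynomial (Fin k) ℤ) :
    MvPolynomial (Fin k) ℤ := translate K P - P

/-- `u ^ n` as concatenation. -/
def wpow {A : Type} (u : List A) (n : ℕ) : List A := (List.replicate n u).flatten

/-- A pumping pattern `q(x₁,…,x_p) = α₀ u₁^{x₁} α₁ ⋯ u_p^{x_p} α_p`. -/
def IsPumping {A : Type} {p : ℕ} (q : (Fin p → ℕ) → List A) : Prop :=
  ∃ (α : Fin (p + 1) → List A) (u : Fin p → List A),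
    ∀ x : Fin p → ℕ,
      q x = α 0 ++ ((List.finRange p).map (fun i => wpow (u i) (x i) ++ α i.succ)).flatten

/-- A natural binomial function: an ℕ-linear combination of products of
simple binomial functions `x ↦ binom (x - ℓ) k` (with truncated subtraction). -/
def IsNatBinomFun {p : ℕ} (F : (Fin p → ℕ) → ℕ) : Prop :=
  ∃ (n : ℕ) (c : Fin n → ℕ) (a b : Fin n → Fin p → ℕ),
    ∀ x : Fin p → ℕ, F x = ∑ i, c i * ∏ j, Nat.choose (x j - a i j) (b i j)

/-- The binomial monomial `pbinom (X_j - ℓ, m) = (X_j-ℓ)(X_j-ℓ-1)⋯(X_j-ℓ-m+1)/m!`. -/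
noncomputable def pbinom {k : ℕ} (j : Fin k) (ℓ m : ℕ) : MvPolynomial (Fin k) ℚ :=
  MvPolynomial.C ((m.factorial : ℚ)⁻¹) *
    ∏ t ∈ Finset.range m,
      (MvPolynomial.X j - MvPolynomial.C (ℓ : ℚ) - MvPolynomial.C (t : ℚ))

/-- Integer binomial polynomial: a ℤ-linear combination of products of
binomial monomials. -/
def IsIntBinomPoly {k : ℕ} (P : MvPolynomial (Fin k) ℚ) : Prop :=
  ∃ (n : ℕ) (c : Fin n → ℤ) (a b : Fin n → Fin k → ℕ),
    P = ∑ i, MvPolynomial.C (c i : ℚ) * ∏ j, pbinom j (a i j) (b i j)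

/-- Natural binomial polynomial: an ℕ-linear combination of products of
binomial monomials. -/
def IsNatBinomPoly {k : ℕ} (P : MvPolynomial (Fin k) ℚ) : Prop :=
  ∃ (n : ℕ) (c : Fin n → ℕ) (a b : Fin n → Fin k → ℕ),
    P = ∑ i, MvPolynomial.C (c i : ℚ) * ∏ j, pbinom j (a i j) (b i j)

/-- Strongly natural binomial polynomial: every partial substitution of
natural numbers yields a natural binomial polynomial. -/
def IsStrongNatBinomPoly {k : ℕ} (P : MvPolynomial (Fin k) ℚ) : Prop :=
  ∀ ν : Fin k → Option ℕ, IsNatBinomPoly (restrictQ ν P)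

/-- Ultimately polynomial. -/
def UltimatelyPoly {A : Type} (f : List A → ℤ) : Prop :=
  ∃ N₀ : ℕ, ∀ (p : ℕ) (q : (Fin p → ℕ) → List A), IsPumping q →
    ∃ P : MvPolynomial (Fin p) ℚ, ∀ x : Fin p → ℕ, (∀ i, N₀ ≤ x i) →
      (f (q x) : ℚ) = MvPolynomial.eval (fun i => (x i : ℚ)) P

/-- `(k,ℕ)`-combinatorial. -/
def Combinatorial {A : Type} (k : ℕ) (f : List A → ℤ) : Prop :=
  ∃ ω : ℕ, ∀ q : (Fin k → ℕ) → List A, IsPumping q →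
    ∃ P : MvPolynomial (Fin k) ℚ, IsStrongNatBinomPoly P ∧
      ∀ x : Fin k → ℕ, (∀ i, 1 ≤ x i) →
        (f (q (fun i => ω * x i)) : ℚ) = MvPolynomial.eval (fun i => (x i : ℚ)) P


/-! ### Stream-based natural binomial functions -/

/-- Natural binomial functions on streams of naturals, inductively. -/
inductive NB : ((ℕ → ℕ) → ℕ) → Prop
  | const (c : ℕ) : NB fun _ => c
  | add {F G} : NB F → NB G → NB fun x => F x + G x
  | mulBinom (j a b : ℕ) {F} (h : NB F) :
      NB fun x => Nat.choose (x j - a) b * F (fun t => x (t + (j + 1)))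

theorem NB.congr {F G} (h : NB F) (hfg : ∀ x, F x = G x) : NB G := by
  have hFG : F = G := funext hfg
  exact hFG ▸ h

theorem NB.smul {F} (h : NB F) (c : ℕ) : NB fun x => c * F x := by
  induction h with
  | const c' => exact NB.const (c * c')
  | add h1 h2 ih1 ih2 => exact (ih1.add ih2).congr fun x => (mul_add c _ _).symm
  | mulBinom j a b h ih =>
      exact (NB.mulBinom j a b ih).congr fun x => (mul_left_comm _ _ _)

theorem NB.shift {F} (h : NB F) (k : ℕ) : NB fun x => F (fun t => x (t + k)) := by
  induction h with
  | const c => exact NB.const c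
  | add h1 h2 ih1 ih2 => exact ih1.add ih2
  | mulBinom j a b h _ =>
      refine (NB.mulBinom (j + k) a b h).congr fun x => ?_
      have h2 : (fun t => x (t + (j + k + 1))) = fun t => x (t + (j + 1) + k) :=
        funext fun t => congrArg x (by omega)
      rw [h2]

theorem NB.finsum {N : ℕ} {F : ℕ → (ℕ → ℕ) → ℕ} (h : ∀ i ∈ Finset.range N, NB (F i)) :
    NB fun x => ∑ i ∈ Finset.range N, F i x := by
  induction N with
  | zero => exact (NB.const 0).congr fun x => by simp
  | succ N ih =>
      refine ((ih fun i hi => h i (by simp at hi ⊢; omega)).add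
        (h N (by simp))).congr fun x => ?_
      rw [Finset.sum_range_succ]

/-- Vandermonde, range form. -/
theorem choose_add_eq_sum (y K b : ℕ) :
    (y + K).choose b = ∑ i ∈ Finset.range (b + 1), K.choose (b - i) * y.choose i := by
  rw [Nat.add_choose_eq, Finset.Nat.sum_antidiagonal_eq_sum_range_succ_mk]
  exact Finset.sum_congr rfl fun i _ => mul_comm _ _

theorem nb_binom_shift (j k a b : ℕ) (hka : a ≤ k) {F} (h : NB F) :
    NB fun x => Nat.choose (x j + k - a) b * F (fun t => x (t + (j + 1))) := by
  refine (NB.finsum (N := b + 1)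
    (F := fun i x => (k - a).choose (b - i) * (Nat.choose (x j - 0) i *
      F (fun t => x (t + (j + 1)))))
    (fun i _ => (NB.mulBinom j 0 i h).smul _)).congr fun x => ?_
  have h1 : x j + k - a = x j + (k - a) := by omega
  rw [h1, choose_add_eq_sum, Finset.sum_mul]
  exact Finset.sum_congr rfl fun i _ => by rw [Nat.sub_zero, mul_assoc]

/-! ### Eventually-binomial functions in one distinguished variable -/

/-- Binomial forms in an extra variable `e`, with offsets bounded by `E`. -/
inductive BinForm (E : ℕ) : (ℕ → (ℕ → ℕ) → ℕ) → Prop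
  | basic (a b : ℕ) (ha : a ≤ E) {F} (hF : NB F) :
      BinForm E fun e x => Nat.choose (e - a) b * F x
  | zero : BinForm E fun _ _ => 0
  | add {Φ Ψ} : BinForm E Φ → BinForm E Ψ → BinForm E fun e x => Φ e x + Ψ e x

theorem BinForm.congr {E Φ Ψ} (h : BinForm E Φ) (hfg : ∀ e x, Φ e x = Ψ e x) :
    BinForm E Ψ := by
  have hΦΨ : Φ = Ψ := funext fun e => funext (hfg e)
  exact hΦΨ ▸ h

theorem BinForm.slice {E Φ} (h : BinForm E Φ) (e : ℕ) : NB (Φ e) := by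
  induction h with
  | basic a b ha hF => exact hF.smul _
  | zero => exact NB.const 0
  | add h1 h2 ih1 ih2 => exact ih1.add ih2

theorem BinForm.mono {E E' Φ} (hE : E ≤ E') (h : BinForm E Φ) : BinForm E' Φ := by
  induction h with
  | basic a b ha hF => exact BinForm.basic a b (ha.trans hE) hF
  | zero => exact BinForm.zero
  | add h1 h2 ih1 ih2 => exact ih1.add ih2

theorem BinForm.ofNB {E F} (h : NB F) : BinForm E fun _ x => F x :=
  (BinForm.basic 0 0 (Nat.zero_le E) h).congr fun e x => by simp

theorem BinForm.finsum {E : ℕ} {N : ℕ} {Φ : ℕ → ℕ → (ℕ → ℕ) → ℕ}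
    (h : ∀ i ∈ Finset.range N, BinForm E (Φ i)) :
    BinForm E fun e x => ∑ i ∈ Finset.range N, Φ i e x := by
  induction N with
  | zero => exact BinForm.zero.congr fun e x => by simp
  | succ N ih =>
      refine ((ih fun i hi => h i (by simp at hi ⊢; omega)).add
        (h N (by simp))).congr fun e x => ?_
      rw [Finset.sum_range_succ]

/-- The full class: arbitrary below `E`, binomial form above. -/
def InClass (E : ℕ) (Φ : ℕ → (ℕ → ℕ) → ℕ) : Prop :=
  (∀ e, e < E → NB (Φ e)) ∧ ∃ Φ', BinForm E Φ' ∧ ∀ e, E ≤ e → ∀ x, Φ e x = Φ' e x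

theorem InClass.congr {E Φ Ψ} (h : InClass E Φ) (hfg : ∀ e x, Φ e x = Ψ e x) :
    InClass E Ψ := by
  have hΦΨ : Φ = Ψ := funext fun e => funext (hfg e)
  exact hΦΨ ▸ h

theorem InClass.slice {E Φ} (h : InClass E Φ) (e : ℕ) : NB (Φ e) := by
  rcases lt_or_ge e E with he | he
  · exact h.1 e he
  · obtain ⟨Φ', hB, hval⟩ := h.2
    exact (hB.slice e).congr fun x => (hval e he x).symm

theorem InClass.mono {E E' Φ} (hE : E ≤ E') (h : InClass E Φ) : InClass E' Φ := by
  obtain ⟨Φ', hB, hval⟩ := h.2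
  refine ⟨fun e _ => h.slice e, Φ', hB.mono hE, fun e he x => hval e (hE.trans he) x⟩

theorem InClass.add {E Φ Ψ} (h1 : InClass E Φ) (h2 : InClass E Ψ) :
    InClass E fun e x => Φ e x + Ψ e x := by
  obtain ⟨Φ', hB1, hv1⟩ := h1.2
  obtain ⟨Ψ', hB2, hv2⟩ := h2.2
  exact ⟨fun e he => (h1.1 e he).add (h2.1 e he), fun e x => Φ' e x + Ψ' e x,
    hB1.add hB2, fun e he x => by
      show Φ e x + Ψ e x = Φ' e x + Ψ' e x
      rw [hv1 e he x, hv2 e he x]⟩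

theorem InClass.finsum {E : ℕ} {N : ℕ} {Φ : ℕ → ℕ → (ℕ → ℕ) → ℕ}
    (h : ∀ i ∈ Finset.range N, InClass E (Φ i)) :
    InClass E fun e x => ∑ i ∈ Finset.range N, Φ i e x := by
  induction N with
  | zero =>
      exact ⟨fun e _ => (NB.const 0).congr fun x => by simp,
        fun _ _ => 0, BinForm.zero, fun e _ x => by simp⟩
  | succ N ih =>
      refine ((ih fun i hi => h i (by simp at hi ⊢; omega)).add
        (h N (by simp))).congr fun e x => ?_
      rw [Finset.sum_range_succ]

theorem InClass.ofCap {s' : ℕ} {Θ : ℕ → (ℕ → ℕ) → ℕ} (hΘ : ∀ c, c ≤ s' → NB (Θ c)) :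
    InClass (s' + 1) (fun e x => Θ (min e s') x) := by
  constructor
  · intro e he
    have hmin : min e s' = e := by omega
    show NB (fun x => Θ (min e s') x)
    rw [hmin]; exact hΘ e (by omega)
  · refine ⟨fun e x => Nat.choose (e - 0) 0 * Θ s' x,
      BinForm.basic 0 0 (Nat.zero_le _) (hΘ s' le_rfl), fun e he x => ?_⟩
    have hmin : min e s' = s' := by omega
    show Θ (min e s') x = (e - 0).choose 0 * Θ s' x
    rw [hmin]; simp

theorem sum_min_split (s' : ℕ) {e : ℕ} (he : s' ≤ e) (h : ℕ → ℕ → ℕ) :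
    ∑ m ∈ Finset.range e, h (min m s') (e - 1 - m)
      = (∑ m ∈ Finset.range s', h m (e - 1 - m)) + ∑ k ∈ Finset.range (e - s'), h s' k := by
  obtain ⟨K, rfl⟩ : ∃ K, e = s' + K := ⟨e - s', by omega⟩
  rw [Finset.sum_range_add]
  congr 1
  · exact Finset.sum_congr rfl fun m hm => by
      rw [min_eq_left (by simp at hm; omega)]
  · have h1 : ∀ i ∈ Finset.range K, h (min (s' + i) s') (s' + K - 1 - (s' + i))
        = h s' (K - 1 - i) := fun i hi => by
      rw [min_eq_right (by omega)]
      congr 1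
      omega
    have h2 : s' + K - s' = K := by omega
    rw [h2, Finset.sum_congr rfl h1, Finset.sum_range_reflect (fun i => h s' i) K]

theorem sum_range_choose_add (T b K : ℕ) :
    ∑ k ∈ Finset.range K, (T + k).choose b
      = ∑ i ∈ Finset.range (b + 1), T.choose (b - i) * K.choose (i + 1) := by
  induction K with
  | zero => simp
  | succ K ih =>
      rw [Finset.sum_range_succ, ih]
      have hv : (T + K).choose b = ∑ i ∈ Finset.range (b + 1), T.choose (b - i) * K.choose i := by
        rw [add_comm T K]
        exact choose_add_eq_sum K T b
      rw [hv, ← Finset.sum_add_distrib]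
      exact Finset.sum_congr rfl fun i _ => by
        rw [← mul_add, Nat.choose_succ_succ, add_comm (K.choose i)]


theorem BinForm.precompSub {E k E2 : ℕ} {Φ' : ℕ → (ℕ → ℕ) → ℕ} (hk : E + k ≤ E2)
    (h : BinForm E Φ') : BinForm E2 fun e x => Φ' (e - k) x := by
  induction h with
  | basic a b ha hF =>
      refine (BinForm.basic (k + a) b (by omega) hF).congr fun e x => ?_
      show Nat.choose (e - (k + a)) b * _ = Nat.choose (e - k - a) b * _
      rw [Nat.sub_sub]
  | zero => exact BinForm.zero
  | add h1 h2 ih1 ih2 => exact ih1.add ih2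

theorem BinForm.hockey {E s' : ℕ} {Φ' : ℕ → (ℕ → ℕ) → ℕ} (h : BinForm E Φ') :
    BinForm (E + s' + 1) fun e x => ∑ k ∈ Finset.range (e - s' - E), Φ' (E + k) x := by
  induction h with
  | zero => exact BinForm.zero.congr fun e x => by simp
  | add h1 h2 ih1 ih2 =>
      refine (ih1.add ih2).congr fun e x => ?_
      show _ = ∑ k ∈ Finset.range (e - s' - E), _
      rw [← Finset.sum_add_distrib]
  | @basic a b ha F hF =>
      refine (BinForm.finsum (N := b + 1) (Φ := fun i e x =>
        Nat.choose (e - (s' + E)) (i + 1) * ((E - a).choose (b - i) * F x))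
        (fun i _ => BinForm.basic (s' + E) (i + 1) (by omega) (hF.smul _))).congr
        fun e x => ?_
      show ∑ i ∈ Finset.range (b + 1), (e - (s' + E)).choose (i + 1) * ((E - a).choose (b - i) * F x)
        = ∑ k ∈ Finset.range (e - s' - E), (E + k - a).choose b * F x
      have h1 : ∀ k : ℕ, E + k - a = (E - a) + k := fun k => by omega
      have h2 : e - s' - E = e - (s' + E) := by rw [Nat.sub_sub]
      simp only [h1]
      rw [← Finset.sum_mul, sum_range_choose_add, Finset.sum_mul]
      refine Finset.sum_congr rfl fun i _ => ?_
      rw [h2]; ring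

theorem binform_comp {E : ℕ} {Φ' : ℕ → (ℕ → ℕ) → ℕ} (h : BinForm E Φ') (j k : ℕ)
    (hk : E ≤ k) : NB fun x => Φ' (x j + k) (fun t => x (t + (j + 1))) := by
  induction h with
  | zero => exact NB.const 0
  | add h1 h2 ih1 ih2 => exact ih1.add ih2
  | basic a b ha hF => exact nb_binom_shift j k a b (ha.trans hk) hF

theorem binform_hockey_comp {E : ℕ} {Φ' : ℕ → (ℕ → ℕ) → ℕ} (h : BinForm E Φ')
    (j k₁ : ℕ) :
    NB fun x => ∑ i ∈ Finset.range (x j + k₁), Φ' (E + i) (fun t => x (t + (j + 1))) := by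
  induction h with
  | zero => exact (NB.const 0).congr fun x => by simp
  | add h1 h2 ih1 ih2 =>
      refine (ih1.add ih2).congr fun x => ?_
      show _ = ∑ i ∈ Finset.range (x j + k₁), _
      rw [← Finset.sum_add_distrib]
  | @basic a b ha F hF =>
      refine (NB.finsum (N := b + 1) (F := fun r x =>
        (E - a).choose (b - r) * (Nat.choose (x j + k₁ - 0) (r + 1) * F (fun t => x (t + (j + 1)))))
        (fun r _ => (nb_binom_shift j k₁ 0 (r + 1) (Nat.zero_le _) hF).smul _)).congr
        fun x => ?_
      show ∑ r ∈ Finset.range (b + 1), (E - a).choose (b - r) * ((x j + k₁ - 0).choose (r + 1) * F (fun t => x (t + (j + 1))))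
        = ∑ i ∈ Finset.range (x j + k₁), (E + i - a).choose b * F (fun t => x (t + (j + 1)))
      have h1 : ∀ k : ℕ, E + k - a = (E - a) + k := fun k => by omega
      simp only [h1, Nat.sub_zero]
      rw [← Finset.sum_mul, sum_range_choose_add, Finset.sum_mul]
      exact Finset.sum_congr rfl fun r _ => by ring

/-- Helper choosing binomial forms for a capped family. -/
theorem cap_rep {s' E' : ℕ} {Ψ : ℕ → ℕ → (ℕ → ℕ) → ℕ}
    (hΨ : ∀ c, c ≤ s' → InClass E' (Ψ c)) :
    ∃ Φ' : ℕ → ℕ → (ℕ → ℕ) → ℕ, (∀ c, BinForm E' (Φ' c)) ∧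
      ∀ c, c ≤ s' → ∀ e, E' ≤ e → ∀ x, Ψ c e x = Φ' c e x := by
  have hrep' : ∀ c, ∃ Φ', BinForm E' Φ' ∧ (c ≤ s' → ∀ e, E' ≤ e → ∀ x, Ψ c e x = Φ' e x) := by
    intro c
    by_cases hc : c ≤ s'
    · obtain ⟨Φ', hB, hval⟩ := (hΨ c hc).2
      exact ⟨Φ', hB, fun _ => hval⟩
    · exact ⟨fun _ _ => 0, BinForm.zero, fun h => absurd h hc⟩
  choose Φ' hB hval using hrep'
  exact ⟨Φ', hB, hval⟩

/-- Lemma: summing over a cut inside the distinguished (uncontrolled) block. -/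
theorem InClass.activeCut {s' E' : ℕ} {Ψ : ℕ → ℕ → (ℕ → ℕ) → ℕ}
    (hΨ : ∀ c, c ≤ s' → InClass E' (Ψ c)) :
    InClass (E' + s' + 1) fun e x => ∑ m ∈ Finset.range e, Ψ (min m s') (e - 1 - m) x := by
  obtain ⟨Φ', hB, hval⟩ := cap_rep hΨ
  constructor
  · intro e _
    exact NB.finsum fun m _ => (hΨ (min m s') (by omega)).slice _
  · refine ⟨fun e x =>
      (∑ m ∈ Finset.range s', Φ' m (e - (1 + m)) x)
      + ((∑ k ∈ Finset.range E', Ψ s' k x)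
        + ∑ k ∈ Finset.range (e - s' - E'), Φ' s' (E' + k) x), ?_, ?_⟩
    · refine BinForm.add (BinForm.finsum fun m hm => (hB m).precompSub ?_)
        (BinForm.add (BinForm.ofNB (NB.finsum fun k _ => (hΨ s' le_rfl).slice k))
          (hB s').hockey)
      simp only [Finset.mem_range] at hm
      omega
    · intro e he x
      show (∑ m ∈ Finset.range e, Ψ (min m s') (e - 1 - m) x) = _
      have heq := sum_min_split s' (e := e) (by omega) (fun c v => Ψ c v x)
      rw [heq]
      have hK : e - s' = E' + (e - s' - E') := by omega
      conv_lhs => rw [hK, Finset.sum_range_add]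
      congr 1
      · refine Finset.sum_congr rfl fun m hm => ?_
        simp only [Finset.mem_range] at hm
        rw [hval m (by omega) (e - 1 - m) (by omega)]
        have h4 : e - 1 - m = e - (1 + m) := by omega
        rw [h4]
      · congr 1
        refine Finset.sum_congr rfl fun k _ => ?_
        rw [hval s' le_rfl (E' + k) (by omega)]

/-- Lemma: summing over a cut inside a shifted block. -/
theorem nb_blockCut {s' E' s j : ℕ} {Ψ : ℕ → ℕ → (ℕ → ℕ) → ℕ}
    (hs : E' + s' + 1 ≤ s)
    (hΨ : ∀ c, c ≤ s' → InClass E' (Ψ c)) :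
    NB fun x => ∑ m ∈ Finset.range (x j + s),
        Ψ (min m s') (x j + s - 1 - m) (fun t => x (t + (j + 1))) := by
  obtain ⟨Φ', hB, hval⟩ := cap_rep hΨ
  refine NB.congr (F := fun x =>
      (∑ m ∈ Finset.range s', Φ' m (x j + (s - 1 - m)) (fun t => x (t + (j + 1))))
      + ((∑ k ∈ Finset.range E', Ψ s' k (fun t => x (t + (j + 1))))
        + ∑ i ∈ Finset.range (x j + (s - s' - E')), Φ' s' (E' + i) (fun t => x (t + (j + 1)))))
    ?_ fun x => ?_
  · refine NB.add (NB.finsum fun m hm => binform_comp (hB m) j (s - 1 - m) ?_)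
      (NB.add (NB.finsum fun k _ => ((hΨ s' le_rfl).slice k).shift (j + 1))
        (binform_hockey_comp (hB s') j (s - s' - E')))
    simp only [Finset.mem_range] at hm
    omega
  · beta_reduce
    have heq := sum_min_split s' (e := x j + s) (by omega)
      (fun c v => Ψ c v (fun t => x (t + (j + 1))))
    rw [heq]
    have hK : x j + s - s' = E' + (x j + (s - s' - E')) := by omega
    have eA : (∑ m ∈ Finset.range s', Φ' m (x j + (s - 1 - m)) (fun t => x (t + (j + 1))))
        = ∑ m ∈ Finset.range s', Ψ m (x j + s - 1 - m) (fun t => x (t + (j + 1))) := by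
      refine Finset.sum_congr rfl fun m hm => ?_
      simp only [Finset.mem_range] at hm
      rw [hval m (by omega) (x j + s - 1 - m) (by omega)]
      have h4 : x j + s - 1 - m = x j + (s - 1 - m) := by omega
      rw [h4]
    have eC : (∑ i ∈ Finset.range (x j + (s - s' - E')), Φ' s' (E' + i) (fun t => x (t + (j + 1))))
        = ∑ i ∈ Finset.range (x j + (s - s' - E')), Ψ s' (E' + i) (fun t => x (t + (j + 1))) := by
      refine Finset.sum_congr rfl fun i _ => ?_
      rw [hval s' le_rfl (E' + i) (by omega)]
    have eS : (∑ k ∈ Finset.range (x j + s - s'), Ψ s' k (fun t => x (t + (j + 1))))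
        = (∑ k ∈ Finset.range E', Ψ s' k (fun t => x (t + (j + 1))))
          + ∑ i ∈ Finset.range (x j + (s - s' - E')), Ψ s' (E' + i) (fun t => x (t + (j + 1))) := by
      rw [hK]
      exact Finset.sum_range_add _ _ _
    rw [eA, eC, eS]


/-! ### Words, monoids and split sums -/

section Words

variable {A M : Type} [Monoid M]

/-- Sum over decompositions of `w` into `n+1` factors of `κ` applied to the images,
with the first factor premultiplied by `acc`. -/
def Sfun (μ : List A → M) : ℕ → M → (List M → ℕ) → List A → ℕ
  | 0, acc, κ, w => κ [acc * μ w]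
  | n+1, acc, κ, w =>
      ∑ i ∈ Finset.range (w.length + 1),
        Sfun μ n 1 (fun ms => κ ((acc * μ (w.take i)) :: ms)) (w.drop i)

variable {μ : List A → M}

theorem Sfun_append (hμm : ∀ u v, μ (u ++ v) = μ u * μ v) (n : ℕ) (acc : M)
    (κ : List M → ℕ) (a T : List A) :
    Sfun μ (n+1) acc κ (a ++ T) =
      (∑ i ∈ Finset.range a.length,
        Sfun μ n 1 (fun ms => κ ((acc * μ (a.take i)) :: ms)) (a.drop i ++ T))
      + Sfun μ (n+1) (acc * μ a) κ T := by
  show (∑ i ∈ Finset.range ((a ++ T).length + 1),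
      Sfun μ n 1 (fun ms => κ ((acc * μ ((a ++ T).take i)) :: ms)) ((a ++ T).drop i)) = _
  have hlen : (a ++ T).length + 1 = a.length + (T.length + 1) := by
    rw [List.length_append]; omega
  rw [hlen, Finset.sum_range_add]
  congr 1
  · refine Finset.sum_congr rfl fun i hi => ?_
    simp only [Finset.mem_range] at hi
    rw [List.take_append_of_le_length (le_of_lt hi),
      List.drop_append_of_le_length (le_of_lt hi)]
  · show _ = ∑ i ∈ Finset.range (T.length + 1),
      Sfun μ n 1 (fun ms => κ (((acc * μ a) * μ (T.take i)) :: ms)) (T.drop i)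
    refine Finset.sum_congr rfl fun i _ => ?_
    rw [List.take_append, List.drop_append, hμm, mul_assoc, Nat.add_sub_cancel_left,
      List.take_of_length_le (by omega), List.drop_of_length_le (by omega), List.nil_append]

theorem wpow_zero (u : List A) : wpow u 0 = [] := rfl

theorem wpow_succ (u : List A) (n : ℕ) : wpow u (n+1) = u ++ wpow u n := by
  simp [wpow, List.replicate_succ]

theorem mu_wpow (hμ1 : μ [] = 1) (hμm : ∀ u v, μ (u ++ v) = μ u * μ v)
    (u : List A) (n : ℕ) : μ (wpow u n) = μ u ^ n := by
  induction n with
  | zero => simpa [wpow_zero] using hμ1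
  | succ n ih => rw [wpow_succ, hμm, ih, pow_succ']

theorem Sfun_block (hμm : ∀ u v, μ (u ++ v) = μ u * μ v) :
    ∀ (e n : ℕ) (acc : M) (κ : List M → ℕ) (u T : List A),
    Sfun μ (n+1) acc κ (wpow u e ++ T) =
      (∑ m ∈ Finset.range e, ∑ r ∈ Finset.range u.length,
        Sfun μ n 1 (fun ms => κ ((acc * μ u ^ m * μ (u.take r)) :: ms))
          (u.drop r ++ (wpow u (e - 1 - m) ++ T)))
      + Sfun μ (n+1) (acc * μ u ^ e) κ T := by
  intro e
  induction e with
  | zero =>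
      intro n acc κ u T
      show Sfun μ (n+1) acc κ ([] ++ T) = _
      rw [List.nil_append]
      simp [pow_zero]
  | succ e ih =>
      intro n acc κ u T
      have h1 : wpow u (e+1) ++ T = u ++ (wpow u e ++ T) := by
        rw [wpow_succ, List.append_assoc]
      rw [h1, Sfun_append hμm, ih n (acc * μ u) κ u T, Finset.sum_range_succ']
      have hg0 : (∑ r ∈ Finset.range u.length,
          Sfun μ n 1 (fun ms => κ ((acc * μ u ^ 0 * μ (u.take r)) :: ms))
            (u.drop r ++ (wpow u (e + 1 - 1 - 0) ++ T)))
          = ∑ r ∈ Finset.range u.length,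
            Sfun μ n 1 (fun ms => κ ((acc * μ (u.take r)) :: ms))
              (u.drop r ++ (wpow u e ++ T)) := by
        refine Finset.sum_congr rfl fun r _ => ?_
        have he : e + 1 - 1 - 0 = e := by omega
        rw [he, pow_zero, mul_one]
      have hgm : (∑ m ∈ Finset.range e, ∑ r ∈ Finset.range u.length,
          Sfun μ n 1 (fun ms => κ ((acc * μ u ^ (m+1) * μ (u.take r)) :: ms))
            (u.drop r ++ (wpow u (e + 1 - 1 - (m+1)) ++ T)))
          = ∑ m ∈ Finset.range e, ∑ r ∈ Finset.range u.length,
            Sfun μ n 1 (fun ms => κ (((acc * μ u) * μ u ^ m * μ (u.take r)) :: ms))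
              (u.drop r ++ (wpow u (e - 1 - m) ++ T)) := by
        refine Finset.sum_congr rfl fun m _ => Finset.sum_congr rfl fun r _ => ?_
        have he : e + 1 - 1 - (m+1) = e - 1 - m := by omega
        rw [he, pow_succ', ← mul_assoc]
      have hC : acc * μ u ^ (e+1) = acc * μ u * μ u ^ e := by
        rw [pow_succ', ← mul_assoc]
      rw [hg0, hgm, hC]
      omega

/-- Pattern tail: list of `(u, α)` blocks, with exponents read off a stream. -/
def patW : List (List A × List A) → (ℕ → ℕ) → List A
  | [], _ => []
  | (u, α) :: L, x => wpow u (x 0) ++ (α ++ patW L (fun t => x (t + 1)))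

theorem patW_congr : ∀ (L : List (List A × List A)) (x y : ℕ → ℕ),
    (∀ t, t < L.length → x t = y t) → patW L x = patW L y := by
  intro L
  induction L with
  | nil => intro x y _; rfl
  | cons p L ih =>
      intro x y h
      obtain ⟨u, α⟩ := p
      show wpow u (x 0) ++ (α ++ patW L fun t => x (t+1)) = _
      rw [h 0 (by simp), ih (fun t => x (t+1)) (fun t => y (t+1))
        (fun t ht => h (t+1) (by simp; omega))]
      rfl

theorem mu_patW_stab (hμ1 : μ [] = 1) (hμm : ∀ u v, μ (u ++ v) = μ u * μ v)
    {s' : ℕ} (hstab : ∀ (m : M) (k : ℕ), m ^ (s' + k) = m ^ s') :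
    ∀ (L : List (List A × List A)) (x y : ℕ → ℕ),
    (∀ t, s' ≤ x t) → (∀ t, s' ≤ y t) → μ (patW L x) = μ (patW L y) := by
  intro L
  induction L with
  | nil => intro x y _ _; rfl
  | cons p L ih =>
      intro x y hx hy
      obtain ⟨u, α⟩ := p
      show μ (wpow u (x 0) ++ (α ++ patW L fun t => x (t+1)))
        = μ (wpow u (y 0) ++ (α ++ patW L fun t => y (t+1)))
      rw [hμm, hμm, hμm, hμm, mu_wpow hμ1 hμm, mu_wpow hμ1 hμm,
        ih (fun t => x (t+1)) (fun t => y (t+1)) (fun t => hx (t+1)) (fun t => hy (t+1))]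
      have hxe : μ u ^ x 0 = μ u ^ s' := by
        obtain ⟨k, hk⟩ := Nat.exists_eq_add_of_le (hx 0)
        rw [hk, hstab]
      have hye : μ u ^ y 0 = μ u ^ s' := by
        obtain ⟨k, hk⟩ := Nat.exists_eq_add_of_le (hy 0)
        rw [hk, hstab]
      rw [hxe, hye]

end Words


/-! ### Main induction -/

section Main

variable {A M : Type} [Monoid M] {μ : List A → M} {s' s : ℕ}

theorem main_claim (hμ1 : μ [] = 1) (hμm : ∀ u v, μ (u ++ v) = μ u * μ v)
    (hstab : ∀ (m : M) (k : ℕ), m ^ (s' + k) = m ^ s') :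
    ∀ n : ℕ, (n + 1) * (s' + 1) + 1 ≤ s →
    ∀ (h u₀ α₀ : List A) (L : List (List A × List A)) (acc : M) (κ : List M → ℕ),
    InClass ((n + 1) * (s' + 1))
      (fun e x => Sfun μ n acc κ (h ++ (wpow u₀ e ++ (α₀ ++ patW L (fun t => x t + s))))) := by
  have hpowbig : ∀ (g : M) (e : ℕ), s' ≤ e → g ^ e = g ^ s' := by
    intro g e he
    obtain ⟨k, hk⟩ := Nat.exists_eq_add_of_le he
    rw [hk, hstab]
  have hpowcap : ∀ (g : M) (e : ℕ), g ^ (min e s') = g ^ e := by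
    intro g e
    rcases le_total e s' with he | he
    · rw [min_eq_left he]
    · rw [min_eq_right he, hpowbig g e he]
  intro n
  induction n with
  | zero =>
      intro hs0 h u₀ α₀ L acc κ
      have h1 : (0 + 1) * (s' + 1) = s' + 1 := by ring
      have hss' : s' ≤ s := by omega
      refine ((InClass.ofCap (s' := s')
        (Θ := fun c x => κ [acc * (μ h * (μ u₀ ^ c * (μ α₀ * μ (patW L (fun _ => s)))))])
        (fun c _ => NB.const _)).mono (by omega)).congr fun e x => ?_
      show κ [acc * (μ h * (μ u₀ ^ (min e s') * (μ α₀ * μ (patW L (fun _ => s)))))]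
        = κ [acc * μ (h ++ (wpow u₀ e ++ (α₀ ++ patW L (fun t => x t + s))))]
      rw [hμm, hμm, hμm, mu_wpow hμ1 hμm, hpowcap,
        mu_patW_stab hμ1 hμm hstab L (fun _ => s) (fun t => x t + s)
          (fun t => by show s' ≤ s; omega) (fun t => by show s' ≤ x t + s; omega)]
  | succ n IH =>
      intro hsn
      have hsucc : (n + 1 + 1) * (s' + 1) = (n + 1) * (s' + 1) + (s' + 1) := by ring
      have hsn' : (n + 1) * (s' + 1) + 1 ≤ s := by omega
      have hs_block : (n + 1) * (s' + 1) + s' + 1 ≤ s := by omega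
      have hss' : s' ≤ s := by omega
      have hEE : (n + 1) * (s' + 1) ≤ (n + 1 + 1) * (s' + 1) := by omega
      -- `claimRest` : sums over a pure shifted pattern are natural binomial functions
      have claimRest : ∀ (L : List (List A × List A)) (acc : M) (κ : List M → ℕ),
          NB (fun x => Sfun μ (n + 1) acc κ (patW L (fun t => x t + s))) := by
        intro L
        induction L with
        | nil =>
            intro acc κ
            exact (NB.const (Sfun μ (n + 1) acc κ [])).congr fun x => rfl
        | cons p L' ihL =>
            intro acc κ
            obtain ⟨u, α⟩ := p
            have hΨ : ∀ c, c ≤ s' → InClass ((n + 1) * (s' + 1))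
                (fun e' y => ∑ r ∈ Finset.range u.length,
                  Sfun μ n 1 (fun ms => κ ((acc * μ u ^ c * μ (u.take r)) :: ms))
                    (u.drop r ++ (wpow u e' ++ (α ++ patW L' (fun t => y t + s))))) :=
              fun c _ => InClass.finsum fun r _ =>
                IH hsn' (u.drop r) u α L' 1
                  (fun ms => κ ((acc * μ u ^ c * μ (u.take r)) :: ms))
            have hA0 : NB (fun x => ∑ m ∈ Finset.range (x 0 + s),
                ∑ r ∈ Finset.range u.length,
                  Sfun μ n 1 (fun ms => κ ((acc * μ u ^ (min m s') * μ (u.take r)) :: ms))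
                    (u.drop r ++ (wpow u (x 0 + s - 1 - m) ++
                      (α ++ patW L' (fun t => x (t + 1) + s))))) :=
              (nb_blockCut (j := 0) hs_block hΨ).congr fun x => by
                beta_reduce
                simp only [zero_add]
            have hB1 : NB (fun x => ∑ i ∈ Finset.range α.length,
                Sfun μ n 1 (fun ms => κ ((acc * μ u ^ s' * μ (α.take i)) :: ms))
                  (α.drop i ++ (wpow ([] : List A) 0 ++
                    ([] ++ patW L' (fun t => x (t + 1) + s))))) :=
              NB.finsum fun i _ =>
                ((IH hsn' (α.drop i) [] [] L' 1
                  (fun ms => κ ((acc * μ u ^ s' * μ (α.take i)) :: ms))).slice 0).shift 1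
            have hB2 : NB (fun x => Sfun μ (n + 1) (acc * μ u ^ s' * μ α) κ
                (patW L' (fun t => x (t + 1) + s))) :=
              (ihL (acc * μ u ^ s' * μ α) κ).shift 1
            refine (hA0.add (hB1.add hB2)).congr fun x => ?_
            beta_reduce
            show _ = Sfun μ (n + 1) acc κ
              (wpow u (x 0 + s) ++ (α ++ patW L' (fun t => x (t + 1) + s)))
            conv_rhs => rw [Sfun_block hμm]
            have ebig : acc * μ u ^ (x 0 + s) = acc * μ u ^ s' :=
              by rw [hpowbig (μ u) (x 0 + s) (by omega)]
            rw [ebig]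
            conv_rhs => rw [Sfun_append hμm]
            have eAL : (∑ m ∈ Finset.range (x 0 + s), ∑ r ∈ Finset.range u.length,
                Sfun μ n 1 (fun ms => κ ((acc * μ u ^ (min m s') * μ (u.take r)) :: ms))
                  (u.drop r ++ (wpow u (x 0 + s - 1 - m) ++
                    (α ++ patW L' (fun t => x (t + 1) + s)))))
                = ∑ m ∈ Finset.range (x 0 + s), ∑ r ∈ Finset.range u.length,
                  Sfun μ n 1 (fun ms => κ ((acc * μ u ^ m * μ (u.take r)) :: ms))
                    (u.drop r ++ (wpow u (x 0 + s - 1 - m) ++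
                      (α ++ patW L' (fun t => x (t + 1) + s)))) :=
              Finset.sum_congr rfl fun m _ => Finset.sum_congr rfl fun r _ => by
                rw [hpowcap]
            have eBL : (∑ i ∈ Finset.range α.length,
                Sfun μ n 1 (fun ms => κ ((acc * μ u ^ s' * μ (α.take i)) :: ms))
                  (α.drop i ++ (wpow ([] : List A) 0 ++
                    ([] ++ patW L' (fun t => x (t + 1) + s)))))
                = ∑ i ∈ Finset.range α.length,
                  Sfun μ n 1 (fun ms => κ ((acc * μ u ^ s' * μ (α.take i)) :: ms))
                    (α.drop i ++ patW L' (fun t => x (t + 1) + s)) :=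
              Finset.sum_congr rfl fun i _ => rfl
            rw [eAL, eBL]
      -- the main statement at level `n+1`
      intro h u₀ α₀ L acc κ
      have hH : InClass ((n + 1 + 1) * (s' + 1)) (fun e x =>
          ∑ i ∈ Finset.range h.length,
            Sfun μ n 1 (fun ms => κ ((acc * μ (h.take i)) :: ms))
              (h.drop i ++ (wpow u₀ e ++ (α₀ ++ patW L (fun t => x t + s))))) :=
        InClass.finsum fun i _ =>
          (IH hsn' (h.drop i) u₀ α₀ L 1
            (fun ms => κ ((acc * μ (h.take i)) :: ms))).mono hEE
      have hΨ : ∀ c, c ≤ s' → InClass ((n + 1) * (s' + 1))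
          (fun e' x => ∑ r ∈ Finset.range u₀.length,
            Sfun μ n 1 (fun ms => κ ((acc * μ h * μ u₀ ^ c * μ (u₀.take r)) :: ms))
              (u₀.drop r ++ (wpow u₀ e' ++ (α₀ ++ patW L (fun t => x t + s))))) :=
        fun c _ => InClass.finsum fun r _ =>
          IH hsn' (u₀.drop r) u₀ α₀ L 1
            (fun ms => κ ((acc * μ h * μ u₀ ^ c * μ (u₀.take r)) :: ms))
      have hA : InClass ((n + 1 + 1) * (s' + 1)) (fun e x =>
          ∑ m ∈ Finset.range e,
            ∑ r ∈ Finset.range u₀.length,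
              Sfun μ n 1 (fun ms => κ ((acc * μ h * μ u₀ ^ (min m s') * μ (u₀.take r)) :: ms))
                (u₀.drop r ++ (wpow u₀ (e - 1 - m) ++ (α₀ ++ patW L (fun t => x t + s))))) :=
        (InClass.activeCut hΨ).mono (by omega)
      have hΘ : ∀ c, c ≤ s' → NB (fun x =>
          Sfun μ (n + 1) (acc * μ h * μ u₀ ^ c) κ (α₀ ++ patW L (fun t => x t + s))) := by
        intro c _
        have t1 : NB (fun x => ∑ i ∈ Finset.range α₀.length,
            Sfun μ n 1 (fun ms => κ ((acc * μ h * μ u₀ ^ c * μ (α₀.take i)) :: ms))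
              (α₀.drop i ++ (wpow ([] : List A) 0 ++ ([] ++ patW L (fun t => x t + s))))) :=
          NB.finsum fun i _ =>
            (IH hsn' (α₀.drop i) [] [] L 1
              (fun ms => κ ((acc * μ h * μ u₀ ^ c * μ (α₀.take i)) :: ms))).slice 0
        have t2 : NB (fun x => Sfun μ (n + 1) (acc * μ h * μ u₀ ^ c * μ α₀) κ
            (patW L (fun t => x t + s))) := claimRest L _ κ
        refine (t1.add t2).congr fun x => ?_
        beta_reduce
        rw [Sfun_append hμm]
        rfl
      have hB : InClass ((n + 1 + 1) * (s' + 1)) (fun e x =>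
          Sfun μ (n + 1) (acc * μ h * μ u₀ ^ (min e s')) κ
            (α₀ ++ patW L (fun t => x t + s))) :=
        (InClass.ofCap (s' := s')
          (Θ := fun c x => Sfun μ (n + 1) (acc * μ h * μ u₀ ^ c) κ
            (α₀ ++ patW L (fun t => x t + s))) hΘ).mono (by omega)
      refine (hH.add (hA.add hB)).congr fun e x => ?_
      beta_reduce
      show _ = Sfun μ (n + 1) acc κ (h ++ (wpow u₀ e ++ (α₀ ++ patW L (fun t => x t + s))))
      conv_rhs => rw [Sfun_append hμm, Sfun_block hμm]
      have ecap : acc * μ h * μ u₀ ^ (min e s') = acc * μ h * μ u₀ ^ e := by rw [hpowcap]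
      rw [ecap]
      have eAL : (∑ m ∈ Finset.range e,
          ∑ r ∈ Finset.range u₀.length,
            Sfun μ n 1 (fun ms => κ ((acc * μ h * μ u₀ ^ (min m s') * μ (u₀.take r)) :: ms))
              (u₀.drop r ++ (wpow u₀ (e - 1 - m) ++ (α₀ ++ patW L (fun t => x t + s)))))
          = ∑ m ∈ Finset.range e,
            ∑ r ∈ Finset.range u₀.length,
              Sfun μ n 1 (fun ms => κ ((acc * μ h * μ u₀ ^ m * μ (u₀.take r)) :: ms))
                (u₀.drop r ++ (wpow u₀ (e - 1 - m) ++ (α₀ ++ patW L (fun t => x t + s)))) :=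
        Finset.sum_congr rfl fun m _ => Finset.sum_congr rfl fun r _ => by rw [hpowcap]
      rw [eAL]

end Main


/-! ### Bridge to `decomps` -/

theorem sum_flatMap' {α β : Type} [AddCommMonoid β] (l : List α) (f : α → List β) :
    (l.flatMap f).sum = (l.map fun a => (f a).sum).sum := by
  induction l with
  | nil => rfl
  | cons a l ih => simp [List.flatMap_cons, List.sum_append, ih]

theorem sum_map_list_range {β : Type} [AddCommMonoid β] (f : ℕ → β) (n : ℕ) :
    ((List.range n).map f).sum = ∑ i ∈ Finset.range n, f i := by
  induction n with
  | zero => rfl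
  | succ n ih =>
      rw [List.range_succ, List.map_append, List.sum_append, Finset.sum_range_succ, ih]
      simp

theorem decomps_sum {A β : Type} [AddCommMonoid β] (g : List (List A) → β) (n : ℕ)
    (w : List A) :
    ((decomps (n+1) w).map g).sum
      = ∑ i ∈ Finset.range (w.length + 1),
          ((decomps n (w.drop i)).map fun l => g (w.take i :: l)).sum := by
  show (((splits w).flatMap fun p => (decomps n p.2).map (fun l => p.1 :: l)).map g).sum = _
  rw [List.map_flatMap, sum_flatMap']
  show (((List.range (w.length + 1)).map fun i => ((w.take i, w.drop i) : List A × List A)).map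
      fun p => (((decomps n p.2).map fun l => p.1 :: l).map g).sum).sum = _
  rw [List.map_map, sum_map_list_range]
  refine Finset.sum_congr rfl fun i _ => ?_
  show ((((decomps n (w.drop i)).map fun l => w.take i :: l).map g)).sum = _
  rw [List.map_map]
  rfl

theorem decomps_length {A : Type} : ∀ (n : ℕ) (w : List A) (l : List (List A)),
    l ∈ decomps n w → l.length = n := by
  intro n
  induction n with
  | zero =>
      intro w l hl
      have hd : decomps 0 w = if w.isEmpty then [[]] else [] := rfl
      rw [hd] at hl
      split at hl
      · simp only [List.mem_singleton] at hl
        rw [hl]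
        rfl
      · simp at hl
  | succ n ih =>
      intro w l hl
      have hd : decomps (n+1) w
          = (splits w).flatMap fun p => (decomps n p.2).map (fun l => p.1 :: l) := rfl
      rw [hd] at hl
      simp only [List.mem_flatMap, List.mem_map] at hl
      obtain ⟨p, _, l', hl', rfl⟩ := hl
      simp [ih p.2 l' hl']

theorem Sfun_eq_decomps {A M : Type} [Monoid M] (μ : List A → M) :
    ∀ (n : ℕ) (acc : M) (κ : List M → ℕ) (w : List A),
    Sfun μ n acc κ w
      = ((decomps (n+1) w).map fun l => κ ((acc * μ (l.headD [])) :: l.tail.map μ)).sum := by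
  intro n
  induction n with
  | zero =>
      intro acc κ w
      rw [decomps_sum]
      have hterm : ∀ i ∈ Finset.range (w.length + 1),
          ((decomps 0 (w.drop i)).map fun l =>
            κ ((acc * μ ((w.take i :: l).headD [])) :: (w.take i :: l).tail.map μ)).sum
          = if w.length ≤ i then κ [acc * μ (w.take i)] else 0 := by
        intro i _
        have hd : decomps 0 (w.drop i) = if (w.drop i).isEmpty then [[]] else [] := rfl
        rw [hd]
        by_cases hw : w.length ≤ i
        · have he : (w.drop i).isEmpty = true := by
            simp [List.drop_eq_nil_iff, hw]
          rw [he, if_pos hw]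
          simp
        · have he : (w.drop i).isEmpty = false := by
            simp [List.drop_eq_nil_iff]
            omega
          rw [he, if_neg hw]
          simp
      rw [Finset.sum_congr rfl hterm,
        Finset.sum_eq_single w.length
          (fun b hb hne => by
            simp only [Finset.mem_range] at hb
            rw [if_neg]
            omega)
          (fun hmem => absurd (Finset.self_mem_range_succ _) hmem),
        if_pos le_rfl, List.take_length]
      rfl
  | succ n ih =>
      intro acc κ w
      show (∑ i ∈ Finset.range (w.length + 1),
          Sfun μ n 1 (fun ms => κ ((acc * μ (w.take i)) :: ms)) (w.drop i)) = _
      rw [decomps_sum]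
      refine Finset.sum_congr rfl fun i _ => ?_
      rw [ih]
      refine congrArg List.sum (List.map_congr_left fun l hl => ?_)
      have hlen := decomps_length (n+1) (w.drop i) l hl
      cases l with
      | nil => simp at hlen
      | cons a t => simp [one_mul]

/-! ### From stream functions to `IsNatBinomFun` -/

theorem isNatBinomFun_const (p c : ℕ) : IsNatBinomFun (fun _ : Fin p → ℕ => c) := by
  refine ⟨1, fun _ => c, fun _ _ => 0, fun _ _ => 0, fun x => ?_⟩
  simp

theorem isNatBinomFun_add {p : ℕ} {F G : (Fin p → ℕ) → ℕ}
    (hF : IsNatBinomFun F) (hG : IsNatBinomFun G) :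
    IsNatBinomFun (fun v => F v + G v) := by
  obtain ⟨n1, c1, a1, b1, h1⟩ := hF
  obtain ⟨n2, c2, a2, b2, h2⟩ := hG
  refine ⟨n1 + n2, Fin.append c1 c2, Fin.append a1 a2, Fin.append b1 b2, fun x => ?_⟩
  beta_reduce
  rw [h1 x, h2 x, Fin.sum_univ_add]
  simp [Fin.append_left, Fin.append_right]

theorem nb_toFin {G : (ℕ → ℕ) → ℕ} (h : NB G) :
    ∀ p : ℕ, IsNatBinomFun (fun v : Fin p → ℕ => G (fun t => if ht : t < p then v ⟨t, ht⟩ else 0)) := by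
  induction h with
  | const c => intro p; exact isNatBinomFun_const p c
  | add h1 h2 ih1 ih2 => intro p; exact isNatBinomFun_add (ih1 p) (ih2 p)
  | @mulBinom j a b F hF ih =>
      intro p
      by_cases hj : j < p
      · obtain ⟨p', rfl⟩ : ∃ p', p = j + 1 + p' := ⟨p - (j + 1), by omega⟩
        obtain ⟨n, c, a', b', hF'⟩ := ih p'
        refine ⟨n, c,
          fun i => Fin.append (fun k : Fin (j+1) => if (k : ℕ) = j then a else 0) (a' i),
          fun i => Fin.append (fun k : Fin (j+1) => if (k : ℕ) = j then b else 0) (b' i),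
          fun v => ?_⟩
        beta_reduce
        have e1 : (if ht : j < j + 1 + p' then v ⟨j, ht⟩ else 0) = v ⟨j, hj⟩ := dif_pos hj
        have e2 : F (fun t => if ht : t + (j + 1) < j + 1 + p' then v ⟨t + (j + 1), ht⟩ else 0)
            = F (fun t => if ht : t < p' then (fun tt : Fin p' => v (Fin.natAdd (j+1) tt)) ⟨t, ht⟩ else 0) := by
          refine congrArg F (funext fun t => ?_)
          by_cases ht : t < p'
          · rw [dif_pos (by omega : t + (j+1) < j + 1 + p'), dif_pos ht]
            show v _ = v (Fin.natAdd (j+1) ⟨t, ht⟩)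
            refine congrArg v (Fin.ext ?_)
            show t + (j + 1) = (j + 1) + t
            omega
          · rw [dif_neg (by omega : ¬ (t + (j+1) < j + 1 + p')), dif_neg ht]
        have hF2 : ∀ x : Fin p' → ℕ,
            F (fun t => if ht : t < p' then x ⟨t, ht⟩ else 0)
              = ∑ i : Fin n, c i * ∏ jj : Fin p', (x jj - a' i jj).choose (b' i jj) := hF'
        rw [e1, e2, hF2 (fun tt => v (Fin.natAdd (j+1) tt)), Finset.mul_sum]
        refine Finset.sum_congr rfl fun i _ => ?_
        rw [Fin.prod_univ_add]
        simp only [Fin.append_left, Fin.append_right]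
        have e3 : (∏ k : Fin (j+1),
            Nat.choose (v (Fin.castAdd p' k) - (if ((k : ℕ) = j) then a else 0))
              (if ((k : ℕ) = j) then b else 0))
            = Nat.choose (v (Fin.castAdd p' ⟨j, by omega⟩) - a) b := by
          rw [Finset.prod_eq_single (⟨j, by omega⟩ : Fin (j+1))]
          · simp
          · intro k _ hk
            have hkj : ¬ ((k : ℕ) = j) := fun hc => hk (Fin.ext hc)
            simp [hkj]
          · intro hmem; exact absurd (Finset.mem_univ _) hmem
        rw [e3]
        have e4 : v (Fin.castAdd p' ⟨j, by omega⟩) = v ⟨j, hj⟩ := rfl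
        rw [e4]
        ring
      · refine ⟨1, fun _ => Nat.choose (0 - a) b * F (fun _ => 0), fun _ _ => 0,
          fun _ _ => 0, fun v => ?_⟩
        beta_reduce
        have e2 : (fun t => if ht : t + (j + 1) < p then v ⟨t + (j + 1), ht⟩ else 0)
            = (fun _ : ℕ => 0) := funext fun t => dif_neg (by omega)
        rw [dif_neg hj, e2]
        simp


theorem getD_map_mu {A M : Type} [Monoid M] (μ : List A → M) (hμ1 : μ [] = 1) :
    ∀ (t : List (List A)) (j : ℕ), (t.map μ).getD j 1 = μ (t.getD j []) := by
  intro t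
  induction t with
  | nil => intro j; simp [hμ1]
  | cons a t ih =>
      intro j
      cases j with
      | zero => simp
      | succ j => simpa using ih j

/-- `patW` of a list of indices matches the flattened pumping word. -/
theorem patW_ofList {A : Type} {p : ℕ} (u : Fin p → List A) (β : Fin p → List A)
    (z : Fin p → ℕ) :
    ∀ (l : List (Fin p)) (y : ℕ → ℕ),
      (∀ (k : ℕ) (hk : k < l.length), y k = z (l.get ⟨k, hk⟩)) →
      patW (l.map fun i => (u i, β i)) y
        = (l.map fun i => wpow (u i) (z i) ++ β i).flatten := by
  intro l
  induction l with
  | nil => intro y _; rfl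
  | cons i l' ih =>
      intro y hy
      show wpow (u i) (y 0) ++ (β i ++ patW (l'.map fun i => (u i, β i)) (fun t => y (t + 1)))
        = (wpow (u i) (z i) ++ β i) ++ (l'.map fun i => wpow (u i) (z i) ++ β i).flatten
      rw [hy 0 (by simp), ih (fun t => y (t + 1)) (fun k hk => hy (k + 1) (by simp; omega)),
        List.append_assoc]
      rfl


/-- pumping a star-free ℕ-polyregular function along a pumping
pattern, with all variables translated by a suitable `s ≥ 1`, yields a natural
binomial function on all of `ℕ^p`. -/
theorem statement3 {A : Type} [Fintype A] (f : List A → ℕ)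
    (hf : NSF (fun w => (f w : ℤ))) :
    ∃ s : ℕ, 1 ≤ s ∧
      ∀ (p : ℕ) (q : (Fin p → ℕ) → List A), IsPumping q →
        ∃ F : (Fin p → ℕ) → ℕ, IsNatBinomFun F ∧
          ∀ x : Fin p → ℕ, f (q (fun i => x i + s)) = F x := by
  obtain ⟨d, D, hC, hN, hA⟩ := hf
  have hap : ∀ x : D.M, ∃ n : ℕ, ∀ k, x ^ (n + k) = x ^ n := by
    intro x
    obtain ⟨n, hn⟩ := hA x
    refine ⟨n, fun k => ?_⟩
    induction k with
    | zero => rfl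
    | succ k ih =>
        have h1 : n + (k + 1) = (n + k) + 1 := rfl
        rw [h1, pow_succ, ih, ← pow_succ, hn]
  choose g hg using hap
  have hstab : ∀ (m : D.M) (k : ℕ),
      m ^ (Finset.univ.sup g + k) = m ^ (Finset.univ.sup g) := by
    intro m k
    have hgm : g m ≤ Finset.univ.sup g := Finset.le_sup (Finset.mem_univ m)
    have h1 : Finset.univ.sup g + k = g m + (Finset.univ.sup g - g m + k) := by omega
    have h2 : Finset.univ.sup g = g m + (Finset.univ.sup g - g m) := by omega
    rw [h1, hg m]
    conv_rhs => rw [h2, hg m (Finset.univ.sup g - g m)]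
  set s' : ℕ := Finset.univ.sup g with hs'def
  set s : ℕ := (d + 1 + 1) * (s' + 1) + 1 with hsdef
  have hs1 : 1 ≤ s := by omega
  refine ⟨s, hs1, ?_⟩
  intro p q hq
  obtain ⟨α, u, hqeq⟩ := hq
  set L : List (List A × List A) := (List.finRange p).map (fun i => (u i, α i.succ)) with hLdef
  set κtop : List D.M → ℕ := fun ms => (D.π (fun i => ms.getD i.val 1)).toNat with hκdef
  have hcast : ∀ w : List A, (Sfun D.μ d 1 κtop w : ℤ) = (f w : ℤ) := by
    intro w
    have hCw : (f w : ℤ)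
        = ((decomps (d + 1) w).map (fun l => D.π (fun i => D.μ (l.getD i.val [])))).sum :=
      hC w
    rw [Sfun_eq_decomps, hCw, Nat.cast_list_sum, List.map_map]
    refine congrArg List.sum (List.map_congr_left fun l hl => ?_)
    have hlen := decomps_length (d + 1) w l hl
    show ((κtop ((1 * D.μ (l.headD [])) :: l.tail.map D.μ) : ℕ) : ℤ)
      = D.π (fun i => D.μ (l.getD i.val []))
    rw [hκdef]
    beta_reduce
    rw [Int.toNat_of_nonneg (hN _)]
    congr 1
    funext i
    cases l with
    | nil => simp at hlen
    | cons h0 t =>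
        rcases i with ⟨iv, hiv⟩
        cases iv with
        | zero => simp
        | succ jv =>
            show ((1 * D.μ ((h0 :: t).headD []) :: t.map D.μ)).getD (jv + 1) 1
              = D.μ ((h0 :: t).getD (jv + 1) [])
            rw [List.getD_cons_succ, List.getD_cons_succ]
            exact getD_map_mu D.μ D.map_nil t jv
  have hfS : ∀ w, f w = Sfun D.μ d 1 κtop w := by
    intro w
    have hw := hcast w
    exact_mod_cast hw.symm
  have harith : (d + 1) * (s' + 1) + 1 ≤ s := by
    have hm : (d + 1) * (s' + 1) ≤ (d + 1 + 1) * (s' + 1) :=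
      Nat.mul_le_mul_right _ (by omega)
    omega
  have hclaim := main_claim (μ := D.μ) (s := s) D.map_nil D.map_append hstab d harith
    [] [] (α 0) L 1 κtop
  have hG := hclaim.slice 0
  refine ⟨fun v : Fin p → ℕ => Sfun D.μ d 1 κtop ([] ++ (wpow [] 0 ++ (α 0 ++
      patW L (fun t => (if ht : t < p then v ⟨t, ht⟩ else 0) + s)))),
    nb_toFin hG p, fun x => ?_⟩
  have hword : q (fun i => x i + s)
      = [] ++ (wpow [] 0 ++ (α 0 ++
          patW L (fun t => (if ht : t < p then x ⟨t, ht⟩ else 0) + s))) := by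
    rw [hqeq]
    have hpat : patW L (fun t => (if ht : t < p then x ⟨t, ht⟩ else 0) + s)
        = ((List.finRange p).map fun i => wpow (u i) (x i + s) ++ α i.succ).flatten := by
      rw [hLdef]
      refine patW_ofList u (fun i => α i.succ) (fun i => x i + s) (List.finRange p)
        _ (fun k hk => ?_)
      have hk' : k < p := by simpa using hk
      have hget : (List.finRange p).get ⟨k, hk⟩ = ⟨k, hk'⟩ := by
        apply Fin.ext
        simp
      rw [hget]
      show (if ht : k < p then x ⟨k, ht⟩ else 0) + s = x ⟨k, hk'⟩ + s
      rw [dif_pos hk']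
    rw [hpat]
    rfl
  rw [hword, hfS]

end NRatSeries
end

section
/- Let P ∈ ℕ[X₁,…,X_k] be a non-constant polynomial with natural-number coefficients and let K ∈ ℕ. Then Δ_K(P) := P(X₁+K,…,X_k+K) − P has all its coefficients non-negative and divisible by K; moreover, if K ≥ 1, every monomial whose exponent vector strictly divides (componentwise ≤ and not equal to) the exponent vector of some monomial of P appears with nonzero coefficient in Δ_K(P). -/
open scoped BigOperators Classical

namespace NRatSeries

section Aux
open MvPolynomial

def Ncoef {k : ℕ} (K : ℕ) (β α : Fin k →₀ ℕ) : ℕ :=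
  ∏ i : Fin k, (β i).choose (α i) * K ^ (β i - α i)

lemma expand_pow {k : ℕ} (K : ℕ) (a : Fin k) (n : ℕ) :
    ((X a + C (K:ℤ))^n : MvPolynomial (Fin k) ℤ) =
    ∑ m ∈ Finset.range (n+1),
      monomial (Finsupp.single a m) ((n.choose m * K^(n-m) : ℕ) : ℤ) := by
  rw [add_pow]
  refine Finset.sum_congr rfl fun m _ => ?_
  rw [X_pow_eq_monomial, ← C_pow, ← C_eq_coe_nat, mul_assoc, ← C_mul, mul_comm (monomial _ _),
    C_mul_monomial]
  push_cast
  ring_nf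

lemma coeff_translate_monomial {k : ℕ} (K : ℕ) (β : Fin k →₀ ℕ) :
    ∀ α : Fin k →₀ ℕ, (translate K (monomial β (1:ℤ))).coeff α =
      if α ≤ β then (Ncoef K β α : ℤ) else 0 := by
  induction β using Finsupp.induction with
  | zero =>
    intro α
    rw [monomial_zero', C_1, translate, map_one, coeff_one]
    by_cases h : α = 0
    · simp [h, Ncoef]
    · rw [if_neg (fun h' => h h'.symm), if_neg (fun hle => h (le_antisymm hle bot_le))]
  | single_add a n f haf hn ih =>
    intro α
    have hfa : f a = 0 := Finsupp.notMem_support_iff.mp haf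
    have hQ : translate K (monomial (Finsupp.single a n + f) (1:ℤ)) =
        (X a + C (K:ℤ))^n * translate K (monomial f 1) := by
      rw [show ((monomial ((Finsupp.single a n) + f)) (1:ℤ)) = X a ^ n * monomial f 1 by
            rw [X_pow_eq_monomial, monomial_mul, one_mul],
          translate, translate, map_mul, map_pow, bind₁_X_right]
    rw [hQ, expand_pow, Finset.sum_mul, coeff_sum]
    have hterm : ∀ m ∈ Finset.range (n+1),
        coeff α (monomial (Finsupp.single a m) ((n.choose m * K^(n-m) : ℕ) : ℤ) *
          translate K (monomial f 1)) =
        if m ≤ α a then ((n.choose m * K^(n-m) : ℕ) : ℤ) *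
          coeff (α - Finsupp.single a m) (translate K (monomial f 1)) else 0 := by
      intro m _
      rw [coeff_monomial_mul']
      simp [Finsupp.single_le_iff]
    rw [Finset.sum_congr rfl hterm]
    by_cases h : α ≤ Finsupp.single a n + f
    · have hαa : α a ≤ n := by
        have := h a
        simpa [Finsupp.add_apply, hfa] using (Finsupp.le_def.mp h a)
      have hα' : α - Finsupp.single a (α a) ≤ f := by
        refine Finsupp.le_def.mpr fun i => ?_
        rcases eq_or_ne i a with rfl | hia
        · simp [Finsupp.tsub_apply]
        · have := Finsupp.le_def.mp h i
          simpa [Finsupp.tsub_apply, Finsupp.single_apply, hia.symm,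
            Finsupp.single_eq_of_ne (Ne.symm hia)] using this
      rw [Finset.sum_eq_single_of_mem (α a) (Finset.mem_range.mpr (Nat.lt_succ_of_le hαa))]
      · rw [if_pos le_rfl, ih, if_pos hα', if_pos h]
        rw [← Nat.cast_mul]
        norm_cast
        have key : (n.choose (α a) * K^(n - α a)) * Ncoef K f (α - Finsupp.single a (α a))
            = Ncoef K (Finsupp.single a n + f) α := by
          unfold Ncoef
          have e1 : ∀ i : Fin k,
              ((Finsupp.single a n + f) i).choose (α i) * K ^ ((Finsupp.single a n + f) i - α i)
              = (if i = a then n.choose (α a) * K ^ (n - α a) else 1) *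
                ((f i).choose ((α - Finsupp.single a (α a)) i) *
                  K ^ (f i - (α - Finsupp.single a (α a)) i)) := by
            intro i
            rcases eq_or_ne i a with h' | hia
            · subst h'
              simp [Finsupp.add_apply, Finsupp.tsub_apply, hfa]
            · simp [Finsupp.add_apply, Finsupp.tsub_apply,
                Finsupp.single_eq_of_ne (Ne.symm hia), hia]
          rw [Finset.prod_congr rfl (fun i _ => e1 i)]
          conv_rhs => rw [Finset.prod_mul_distrib,
            Finset.prod_ite_eq' Finset.univ a (fun _ => n.choose (α a) * K ^ (n - α a)),
            if_pos (Finset.mem_univ a)]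
        rw [key]
      · intro m hm hma
        rcases le_or_gt m (α a) with hle | hlt
        · rw [if_pos hle, ih, if_neg, mul_zero]
          intro hcon
          have := Finsupp.le_def.mp hcon a
          rw [Finsupp.tsub_apply, Finsupp.single_eq_same, hfa] at this
          have : α a ≤ m := by omega
          exact hma (le_antisymm hle this)
        · rw [if_neg (not_le.mpr hlt)]
    · rw [if_neg h]
      refine Finset.sum_eq_zero fun m hm => ?_
      by_cases hle : m ≤ α a
      · rw [if_pos hle, ih, if_neg, mul_zero]
        intro hcon
        apply h
        refine Finsupp.le_def.mpr fun i => ?_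
        rcases eq_or_ne i a with h' | hia
        · subst h'
          have := Finsupp.le_def.mp hcon i
          rw [Finsupp.tsub_apply, Finsupp.single_eq_same, hfa] at this
          have hmn : m ≤ n := Nat.lt_succ_iff.mp (Finset.mem_range.mp hm)
          rw [Finsupp.add_apply, Finsupp.single_eq_same, hfa]
          omega
        · have := Finsupp.le_def.mp hcon i
          rw [Finsupp.tsub_apply, Finsupp.single_eq_of_ne hia, Nat.sub_zero] at this
          rw [Finsupp.add_apply, Finsupp.single_eq_of_ne hia, zero_add]
          exact this
      · rw [if_neg hle]

lemma coeff_translate {k : ℕ} (K : ℕ) (P : MvPolynomial (Fin k) ℤ) (α : Fin k →₀ ℕ) :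
    (translate K P).coeff α =
      ∑ β ∈ P.support, P.coeff β * (if α ≤ β then (Ncoef K β α : ℤ) else 0) := by
  conv_lhs => rw [P.as_sum]
  rw [translate, map_sum, coeff_sum]
  refine Finset.sum_congr rfl fun β _ => ?_
  have : (monomial β) (P.coeff β) = C (P.coeff β) * monomial β 1 := by
    rw [C_mul_monomial, mul_one]
  rw [this, map_mul, algHom_C, MvPolynomial.algebraMap_eq, coeff_C_mul, ← translate, coeff_translate_monomial]

lemma coeff_delta {k : ℕ} (K : ℕ) (P : MvPolynomial (Fin k) ℤ) (α : Fin k →₀ ℕ) :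
    (delta K P).coeff α =
      ∑ β ∈ P.support.erase α, P.coeff β * (if α ≤ β then (Ncoef K β α : ℤ) else 0) := by
  have hN : Ncoef K α α = 1 := by
    unfold Ncoef
    simp
  rw [delta, coeff_sub, coeff_translate]
  by_cases hα : α ∈ P.support
  · rw [← Finset.sum_erase_add _ _ hα, if_pos le_rfl, hN]
    push_cast
    ring
  · rw [Finset.erase_eq_of_notMem hα, MvPolynomial.notMem_support_iff.mp hα, sub_zero]

end Aux

/-- for a non-constant `P ∈ ℕ[X₁,…,X_k]` and `K ∈ ℕ`, the
discrete derivative `Δ_K(P)` has non-negative coefficients all divisible by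
`K`; moreover when `K ≥ 1`, every monomial strictly dividing some monomial of
`P` appears (with nonzero coefficient) in `Δ_K(P)`. -/
theorem statement4 {k : ℕ} (K : ℕ) (P : MvPolynomial (Fin k) ℤ)
    (hcoeff : ∀ α : Fin k →₀ ℕ, 0 ≤ P.coeff α)
    (hnonconst : ∃ α ∈ P.support, α ≠ 0) :
    (∀ α : Fin k →₀ ℕ,
      0 ≤ (delta K P).coeff α ∧ (K : ℤ) ∣ (delta K P).coeff α) ∧
    (1 ≤ K → ∀ α β : Fin k →₀ ℕ, β ∈ P.support → α ≤ β → α ≠ β →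
      (delta K P).coeff α ≠ 0) := by
  constructor
  · intro α
    rw [coeff_delta]
    constructor
    · refine Finset.sum_nonneg fun β _ => mul_nonneg (hcoeff β) ?_
      split
      · positivity
      · exact le_refl 0
    · refine Finset.dvd_sum fun β hβ => Dvd.dvd.mul_left ?_ _
      split_ifs with hle
      · have hne : β ≠ α := (Finset.mem_erase.mp hβ).1
        obtain ⟨i, hi⟩ : ∃ i, α i ≠ β i := by
          by_contra hc
          push_neg at hc
          exact hne (Finsupp.ext fun i => (hc i).symm)
        have hlt : α i < β i := lt_of_le_of_ne (Finsupp.le_def.mp hle i) hi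
        have : K ∣ Ncoef K β α :=
          dvd_trans (dvd_mul_of_dvd_right (dvd_pow_self K (Nat.sub_ne_zero_of_lt hlt)) _)
            (Finset.dvd_prod_of_mem _ (Finset.mem_univ i))
        exact_mod_cast Int.natCast_dvd_natCast.mpr this
      · exact dvd_zero _
  · intro hK α β hβ hle hne
    rw [coeff_delta]
    have hβm : β ∈ P.support.erase α := Finset.mem_erase.mpr ⟨fun h => hne h.symm, hβ⟩
    have hpos : 0 < P.coeff β * (if α ≤ β then (Ncoef K β α : ℤ) else 0) := by
      rw [if_pos hle]
      refine mul_pos ?_ ?_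
      · exact lt_of_le_of_ne (hcoeff β) (Ne.symm (MvPolynomial.mem_support_iff.mp hβ))
      · have : 0 < Ncoef K β α := by
          refine Finset.prod_pos fun i _ => ?_
          refine mul_pos (Nat.choose_pos (Finsupp.le_def.mp hle i)) (pow_pos hK _)
        exact_mod_cast this
    have hsum : 0 < ∑ γ ∈ P.support.erase α,
        P.coeff γ * (if α ≤ γ then (Ncoef K γ α : ℤ) else 0) := by
      refine Finset.sum_pos' (fun γ _ => mul_nonneg (hcoeff γ) ?_) ⟨β, hβm, hpos⟩
      split
      · positivity
      · exact le_refl 0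
    exact ne_of_gt hsum


end NRatSeries
end

section
/- Let P ∈ ℤ[X₁,…,X_k]. There exists K ∈ ℕ such that the following are equivalent: (1) P ∈ PolyStrNNeg; (2) for every partial assignment ν : {X₁,…,X_k} ⇀ ℕ, the polynomial τ_K(P|ν) has all coefficients non-negative; (3) for every partial assignment ν : {X₁,…,X_k} ⇀ {0,…,K}, the polynomial τ_K(P|ν) has all coefficients non-negative. -/
open scoped BigOperators Classical

namespace NRatSeries

section Statement6Aux

open MvPolynomial

variable {k : ℕ}

/-- The substitution function combining a partial assignment and a translation. -/
noncomputable def subF (ν : Fin k → Option ℕ) (K : ℕ) (i : Fin k) : MvPolynomial (Fin k) ℤ :=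
  (ν i).elim (X i + C (K : ℤ)) (fun n => C (n : ℤ))

/-- The coefficient of `X i ^ t` in `subF ν K i ^ b`. -/
noncomputable def eC (ν : Fin k → Option ℕ) (K : ℕ) (i : Fin k) (b t : ℕ) : ℤ :=
  (ν i).elim ((b.choose t : ℤ) * (K : ℤ) ^ (b - t)) (fun n => if t = 0 then (n : ℤ) ^ b else 0)

lemma translate_restrict (ν : Fin k → Option ℕ) (K : ℕ) (Q : MvPolynomial (Fin k) ℤ) :
    translate K (restrict ν Q) = bind₁ (subF ν K) Q := by
  unfold translate restrict
  rw [bind₁_bind₁]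
  have hfun : (fun i => (bind₁ fun i => X i + C (K : ℤ)) ((ν i).elim (X i) fun n => C (n : ℤ)))
      = subF ν K := by
    funext i
    cases hν : ν i with
    | none => simp only [subF, hν, Option.elim, bind₁_X_right]
    | some n => simp only [subF, hν, Option.elim, bind₁_C_right]
  rw [hfun]

lemma support_subF_pow (ν : Fin k → Option ℕ) (K : ℕ) (i : Fin k) (b : ℕ) :
    ∀ δ ∈ ((subF ν K i) ^ b).support, δ.support ⊆ ({i} : Finset (Fin k)) := by
  intro δ hδ
  have h1 : ((subF ν K i) ^ b).vars ⊆ {i} := by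
    refine (vars_pow _ _).trans ?_
    unfold subF
    cases ν i with
    | none =>
        simp only [Option.elim]
        refine (vars_add_subset _ _).trans (Finset.union_subset ?_ ?_)
        · rw [vars_X]
        · rw [vars_C]; exact Finset.empty_subset _
    | some n =>
        simp only [Option.elim, vars_C]
        exact Finset.empty_subset _
  intro j hj
  exact h1 ((mem_vars j).mpr ⟨δ, hδ, hj⟩)

lemma coeff_single_subF_pow (ν : Fin k → Option ℕ) (K : ℕ) (i : Fin k) (b t : ℕ) :
    coeff (Finsupp.single i t) ((subF ν K i) ^ b) = eC ν K i b t := by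
  unfold subF eC
  cases hν : ν i with
  | some n =>
      simp only [Option.elim]
      rw [← C_pow, coeff_C]
      simp [Finsupp.single_eq_zero, eq_comm]
  | none =>
      simp only [Option.elim]
      rw [add_pow, coeff_sum]
      have hterm : ∀ m ∈ Finset.range (b + 1),
          coeff (Finsupp.single i t) ((X i : MvPolynomial (Fin k) ℤ) ^ m
              * C (K : ℤ) ^ (b - m) * (b.choose m : MvPolynomial (Fin k) ℤ)) =
            if t = m then (K : ℤ) ^ (b - m) * (b.choose m : ℤ) else 0 := by
        intro m _
        have hre : (X i : MvPolynomial (Fin k) ℤ) ^ m * C (K : ℤ) ^ (b - m)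
              * (b.choose m : MvPolynomial (Fin k) ℤ)
            = C ((K : ℤ) ^ (b - m) * (b.choose m : ℤ)) * X i ^ m := by
          rw [map_mul, ← C_pow, ← map_natCast (C : ℤ →+* MvPolynomial (Fin k) ℤ)]
          ring
        rw [hre, coeff_C_mul, coeff_X_pow]
        have hiff : (Finsupp.single i m = Finsupp.single i t) ↔ t = m :=
          ⟨fun h => ((Finsupp.single_injective i) h).symm, fun h => by rw [h]⟩
        by_cases h : t = m
        · rw [if_pos (hiff.mpr h), if_pos h, mul_one]
        · rw [if_neg (fun hc => h (hiff.mp hc)), if_neg h, mul_zero]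
      rw [Finset.sum_congr rfl hterm, Finset.sum_ite_eq]
      by_cases ht : t ≤ b
      · rw [if_pos (Finset.mem_range.mpr (Nat.lt_succ_of_le ht)), mul_comm]
      · rw [if_neg (fun hc => ht (Nat.lt_succ_iff.mp (Finset.mem_range.mp hc)))]
        have hz : b.choose t = 0 := Nat.choose_eq_zero_of_lt (not_le.mp ht)
        simp [hz]

lemma coeff_prod_univar (h : Fin k → MvPolynomial (Fin k) ℤ)
    (hh : ∀ i, ∀ δ ∈ (h i).support, δ.support ⊆ ({i} : Finset (Fin k)))
    (s : Finset (Fin k)) (γ : Fin k →₀ ℕ) :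
    coeff γ (∏ i ∈ s, h i) =
      if γ.support ⊆ s then ∏ i ∈ s, coeff (Finsupp.single i (γ i)) (h i) else 0 := by
  induction s using Finset.induction generalizing γ with
  | empty =>
      simp only [Finset.prod_empty, coeff_one]
      by_cases hγ : γ = 0
      · subst hγ; simp
      · rw [if_neg (Ne.symm hγ), if_neg (by
          rwa [Finset.subset_empty, Finsupp.support_eq_empty])]
  | @insert j s hj ih =>
      rw [Finset.prod_insert hj, coeff_mul]
      rw [Finset.sum_eq_single (Finsupp.single j (γ j), γ.erase j)]
      · rw [ih]
        by_cases hsub : γ.support ⊆ insert j s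
        · have herase : (γ.erase j).support ⊆ s := by
            rw [Finsupp.support_erase]
            intro i hi
            have hi' := Finset.mem_of_mem_erase hi
            have hne := Finset.ne_of_mem_erase hi
            rcases Finset.mem_insert.mp (hsub hi') with h' | h'
            · exact absurd h' hne
            · exact h'
          rw [if_pos herase, if_pos hsub, Finset.prod_insert hj]
          congr 1
          refine Finset.prod_congr rfl fun i hi => ?_
          rw [Finsupp.erase_ne (ne_of_mem_of_not_mem hi hj)]
        · rw [if_neg hsub]
          have : ¬ (γ.erase j).support ⊆ s := by
            intro hc
            apply hsub
            intro i hi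
            by_cases hij : i = j
            · exact hij ▸ Finset.mem_insert_self j s
            · exact Finset.mem_insert_of_mem (hc (by
                rw [Finsupp.support_erase]; exact Finset.mem_erase.mpr ⟨hij, hi⟩))
          rw [if_neg this, mul_zero]
      · rintro ⟨a, b⟩ hab hne
        rw [Finset.HasAntidiagonal.mem_antidiagonal] at hab
        by_contra hc
        have ha : coeff a (h j) ≠ 0 := fun h0 => hc (by rw [h0, zero_mul])
        have hb : coeff b (∏ i ∈ s, h i) ≠ 0 := fun h0 => hc (by rw [h0, mul_zero])
        have hasupp : a.support ⊆ {j} := hh j a (mem_support_iff.mpr ha)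
        have hbsupp : b.support ⊆ s := by
          by_contra hbs
          rw [ih, if_neg hbs] at hb
          exact hb rfl
        have hbj : b j = 0 := by
          by_contra hbj
          exact hj (hbsupp (Finsupp.mem_support_iff.mpr hbj))
        have haj : a j = γ j := by
          have := DFunLike.congr_fun hab j
          simpa [hbj] using this
        have ha' : a = Finsupp.single j (γ j) := by
          rw [Finsupp.support_subset_singleton] at hasupp
          rw [hasupp, haj]
        have hb' : b = γ.erase j := by
          ext i
          by_cases hij : i = j
          · subst hij; rw [hbj, Finsupp.erase_same]
          · have := DFunLike.congr_fun hab i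
            rw [Finsupp.erase_ne hij]
            have hai : a i = 0 := by
              by_contra hai
              exact hij (Finset.mem_singleton.mp (hasupp (Finsupp.mem_support_iff.mpr hai)))
            simpa [hai] using this
        exact hne (by rw [ha', hb'])
      · intro hmem
        exfalso
        apply hmem
        rw [Finset.HasAntidiagonal.mem_antidiagonal]
        exact Finsupp.single_add_erase j γ

lemma coeff_translate_restrict (ν : Fin k → Option ℕ) (K : ℕ) (Q : MvPolynomial (Fin k) ℤ)
    (γ : Fin k →₀ ℕ) :
    coeff γ (translate K (restrict ν Q)) =
      ∑ β ∈ Q.support, Q.coeff β * ∏ i, eC ν K i (β i) (γ i) := by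
  rw [translate_restrict]
  conv_lhs => rw [Q.as_sum]
  rw [map_sum, coeff_sum]
  refine Finset.sum_congr rfl fun β hβ => ?_
  rw [bind₁_monomial, coeff_C_mul]
  congr 1
  have hprod : (∏ i ∈ β.support, subF ν K i ^ β i) = ∏ i, subF ν K i ^ β i :=
    Finset.prod_subset (Finset.subset_univ _)
      (fun i _ hi => by rw [Finsupp.notMem_support_iff.mp hi, pow_zero])
  rw [hprod, coeff_prod_univar _ (fun i => support_subF_pow ν K i (β i)) Finset.univ γ,
    if_pos (Finset.subset_univ _)]
  exact Finset.prod_congr rfl fun i _ => coeff_single_subF_pow ν K i (β i) (γ i)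


lemma restrict_none_eq (Q : MvPolynomial (Fin k) ℤ) : restrict (fun _ => none) Q = Q := by
  unfold restrict
  simp only [Option.elim]
  rw [bind₁_X_left]
  rfl

lemma restrict_restrict_single (ν : Fin k → Option ℕ) (j : Fin k) (n : ℕ)
    (Q : MvPolynomial (Fin k) ℤ) :
    restrict ν (restrict (fun i => if i = j then some n else none) Q)
      = restrict (fun i => if i = j then some n else ν i) Q := by
  unfold restrict
  rw [bind₁_bind₁]
  have hfun : (fun i => bind₁ (fun i' => ((ν i').elim (X i') fun m => C ((m : ℕ) : ℤ)))
        (((if i = j then some n else none) : Option ℕ).elim (X i) fun m => C ((m : ℕ) : ℤ)))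
      = fun i => ((if i = j then some n else ν i : Option ℕ).elim (X i)
          fun m => C ((m : ℕ) : ℤ)) := by
    funext i
    by_cases hij : i = j
    · simp only [if_pos hij, Option.elim, bind₁_C_right]
    · simp only [if_neg hij, Option.elim, bind₁_X_right]
  rw [hfun]

lemma coeff_translate_of_max (K : ℕ) (Q : MvPolynomial (Fin k) ℤ) (α : Fin k →₀ ℕ)
    (h : MaxMonomial Q α) : (translate K Q).coeff α = Q.coeff α := by
  have hm := coeff_translate_restrict (fun _ => none) K Q α
  rw [restrict_none_eq] at hm
  rw [hm, Finset.sum_eq_single α]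
  · simp [eC]
  · intro β hβ hne
    by_cases hle : α ≤ β
    · exact absurd (h.2 β hβ hle) hne
    · rw [Finsupp.le_def] at hle
      push_neg at hle
      obtain ⟨i, hi⟩ := hle
      have hz : eC (fun _ => none) K i (β i) (α i) = 0 := by
        simp [eC, Nat.choose_eq_zero_of_lt hi]
      rw [Finset.prod_eq_zero (Finset.mem_univ i) hz, mul_zero]
  · intro hns; exact absurd h.1 hns

/-- Explicit bound: sum of `|c| * 2 ^ degree` over the support. -/
noncomputable def Bnd (Q : MvPolynomial (Fin k) ℤ) : ℕ :=
  ∑ β ∈ Q.support, (Q.coeff β).natAbs * 2 ^ (∑ i, β i)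

lemma Bnd_def (Q : MvPolynomial (Fin k) ℤ) :
    Bnd Q = ∑ β ∈ Q.support, (Q.coeff β).natAbs * 2 ^ (∑ i, β i) := rfl

lemma estimate (Q : MvPolynomial (Fin k) ℤ) (ν : Fin k → Option ℕ) (K : ℕ)
    (hmax : ∀ α, MaxMonomial Q α → 0 ≤ Q.coeff α)
    (hK : Bnd Q ≤ K)
    (hν : ∀ i n, ν i = some n → Bnd Q ≤ n ∨ ∀ β ∈ Q.support, β i = 0)
    (γ : Fin k →₀ ℕ) :
    0 ≤ (translate K (restrict ν Q)).coeff γ := by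
  classical
  rw [coeff_translate_restrict]
  by_cases hfree : ∀ i, γ i ≠ 0 → ν i = none
  case neg =>
    push_neg at hfree
    obtain ⟨i, hγi, hνi⟩ := hfree
    refine le_of_eq (Finset.sum_eq_zero fun β hβ => ?_).symm
    obtain ⟨n, hn⟩ := Option.ne_none_iff_exists'.mp hνi
    have hz : eC ν K i (β i) (γ i) = 0 := by simp [eC, hn, hγi]
    rw [Finset.prod_eq_zero (Finset.mem_univ i) hz, mul_zero]
  case pos =>
  set w : Fin k → ℕ := fun i => (ν i).elim K id with hw
  set bb : (Fin k →₀ ℕ) → ℕ := fun β => ∏ i, (β i).choose (γ i) with hbb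
  set ww : (Fin k →₀ ℕ) → ℕ := fun β => ∏ i, w i ^ (β i - γ i) with hww
  set tm : (Fin k →₀ ℕ) → ℤ := fun β => Q.coeff β * ((bb β : ℤ) * (ww β : ℤ)) with htm
  have htm' : ∀ β, tm β = Q.coeff β * ((bb β : ℤ) * (ww β : ℤ)) := fun _ => rfl
  have hbb' : ∀ β, bb β = ∏ i, (β i).choose (γ i) := fun _ => rfl
  have hww' : ∀ β, ww β = ∏ i, w i ^ (β i - γ i) := fun _ => rfl
  have heC : ∀ (i : Fin k) (b : ℕ),
      eC ν K i b (γ i) = ((b.choose (γ i) : ℤ)) * ((w i : ℤ)) ^ (b - γ i) := by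
    intro i b
    cases hν' : ν i with
    | none => simp [eC, hν', hw]
    | some n =>
        have hγ0 : γ i = 0 := by
          by_contra hne
          rw [hfree i hne] at hν'
          cases hν'
        simp [eC, hν', hγ0, hw]
  have hsum : ∀ β ∈ Q.support, Q.coeff β * ∏ i, eC ν K i (β i) (γ i) = tm β := by
    intro β _
    rw [htm']
    congr 1
    rw [hbb', hww']
    push_cast
    rw [← Finset.prod_mul_distrib]
    exact Finset.prod_congr rfl fun i _ => heC i (β i)
  rw [Finset.sum_congr rfl hsum]
  have hvanish : ∀ β ∈ Q.support, tm β ≠ 0 → γ ≤ β := by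
    intro β _ hne
    by_contra hle
    rw [Finsupp.le_def] at hle
    push_neg at hle
    obtain ⟨i, hi⟩ := hle
    apply hne
    have hz : (β i).choose (γ i) = 0 := Nat.choose_eq_zero_of_lt hi
    have hz2 : bb β = 0 := by
      rw [hbb']; exact Finset.prod_eq_zero (Finset.mem_univ i) hz
    rw [htm', hz2]
    simp
  rw [← Finset.sum_filter_of_ne hvanish]
  set U := Q.support.filter (fun β => γ ≤ β) with hU
  have hUsupp : U ⊆ Q.support := Finset.filter_subset _ _
  have hUγ : ∀ β ∈ U, γ ≤ β := fun β hβ => (Finset.mem_filter.mp hβ).2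
  set mp : (Fin k →₀ ℕ) → Prop := fun β => ∀ β' ∈ U, β ≤ β' → β' = β with hmp
  rw [← Finset.sum_filter_add_sum_filter_not U mp]
  set M := U.filter mp with hM
  set N := U.filter (fun β => ¬ mp β) with hN
  have hwge : ∀ i, (∃ β ∈ Q.support, β i ≠ 0) → Bnd Q ≤ w i := by
    rintro i ⟨β, hβ, hne⟩
    cases hν' : ν i with
    | none => simpa [hw, hν'] using hK
    | some n =>
        rcases hν i n hν' with h | h
        · simpa [hw, hν'] using h
        · exact absurd (h β hβ) hne
  have hMmax : ∀ β ∈ M, 1 ≤ Q.coeff β := by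
    intro β hβM
    obtain ⟨hβU, hmpβ⟩ := Finset.mem_filter.mp hβM
    have hsupp : β ∈ Q.support := hUsupp hβU
    have hmm : MaxMonomial Q β := by
      refine ⟨hsupp, fun β' hβ' hle => ?_⟩
      exact hmpβ β' (Finset.mem_filter.mpr ⟨hβ', le_trans (hUγ β hβU) hle⟩) hle
    have h0 := hmax β hmm
    have hne := MvPolynomial.mem_support_iff.mp hsupp
    omega
  have htmM : ∀ β ∈ M, 0 ≤ tm β := by
    intro β hβM
    rw [htm']
    have h1 := hMmax β hβM
    have h2 : (0:ℤ) ≤ (bb β : ℤ) * (ww β : ℤ) := by positivity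
    exact mul_nonneg (by linarith) h2
  have hchoose2 : ∀ a b : ℕ, a.choose b ≤ 2 ^ a := by
    intro a b
    by_cases h : b ≤ a
    · calc a.choose b ≤ ∑ m ∈ Finset.range (a+1), a.choose m :=
          Finset.single_le_sum (fun _ _ => Nat.zero_le _)
            (Finset.mem_range.mpr (Nat.lt_succ_of_le h))
        _ = 2 ^ a := Nat.sum_range_choose a
    · rw [Nat.choose_eq_zero_of_lt (Nat.lt_of_not_le h)]
      exact Nat.zero_le _
  have hbble : ∀ β : Fin k →₀ ℕ, bb β ≤ 2 ^ (∑ i, β i) := by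
    intro β
    rw [hbb', ← Finset.prod_pow_eq_pow_sum]
    exact Finset.prod_le_prod' fun i _ => hchoose2 (β i) (γ i)
  have hbb1 : ∀ β ∈ U, 1 ≤ bb β := by
    intro β hβU
    rw [hbb']
    refine Finset.one_le_prod' fun i _ => ?_
    exact Nat.choose_pos (Finsupp.le_def.mp (hUγ β hβU) i)
  by_cases hNne : N.Nonempty
  case neg =>
    rw [Finset.not_nonempty_iff_eq_empty.mp hNne, Finset.sum_empty, add_zero]
    exact Finset.sum_nonneg htmM
  case pos =>
  obtain ⟨β₀, hβ₀N, hβ₀max⟩ := Finset.exists_max_image N ww hNne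
  have hβ₀U : β₀ ∈ U := (Finset.mem_filter.mp hβ₀N).1
  have hβ₀nmax : ¬ mp β₀ := (Finset.mem_filter.mp hβ₀N).2
  have hβ₀nmax' : ∃ β' ∈ U, β₀ ≤ β' ∧ β' ≠ β₀ := by
    by_contra hc
    push_neg at hc
    exact hβ₀nmax (fun β' hβ' hle => hc β' hβ' hle)
  obtain ⟨β', hβ'U, hβ'le, hβ'ne⟩ := hβ₀nmax'
  set T := U.filter (fun β => β₀ ≤ β ∧ β ≠ β₀) with hT
  have hTne : T.Nonempty := ⟨β', Finset.mem_filter.mpr ⟨hβ'U, hβ'le, hβ'ne⟩⟩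
  obtain ⟨β₁, hβ₁T, hβ₁max⟩ := Finset.exists_max_image T (fun β => ∑ i, β i) hTne
  have hβ₁U : β₁ ∈ U := (Finset.mem_filter.mp hβ₁T).1
  have hβ₁ge : β₀ ≤ β₁ := (Finset.mem_filter.mp hβ₁T).2.1
  have hβ₁ne : β₁ ≠ β₀ := (Finset.mem_filter.mp hβ₁T).2.2
  have hlt : ∀ a b : Fin k →₀ ℕ, a ≤ b → a ≠ b → (∑ i, a i) < ∑ i, b i := by
    intro a b hab hne
    have h1 : ∀ i ∈ Finset.univ, a i ≤ b i := fun i _ => Finsupp.le_def.mp hab i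
    have h2 : ∃ i ∈ Finset.univ, a i < b i := by
      by_contra hc
      push_neg at hc
      exact hne (Finsupp.ext fun i =>
        le_antisymm (Finsupp.le_def.mp hab i) (hc i (Finset.mem_univ i)))
    exact Finset.sum_lt_sum h1 h2
  have hβ₁M : β₁ ∈ M := by
    rw [hM]
    refine Finset.mem_filter.mpr ⟨hβ₁U, ?_⟩
    intro β'' hβ'' hle'
    have hβ''ne : β'' ≠ β₀ := by
      intro hc
      exact hβ₁ne (le_antisymm (hc ▸ hle') hβ₁ge)
    have hβ''T : β'' ∈ T := Finset.mem_filter.mpr ⟨hβ'', le_trans hβ₁ge hle', hβ''ne⟩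
    have hsum' := hβ₁max β'' hβ''T
    by_contra hne'
    exact absurd (hlt β₁ β'' hle' (fun h => hne' h.symm)) (not_lt.mpr hsum')
  have hi₀ : ∃ i, β₀ i < β₁ i := by
    by_contra hc
    push_neg at hc
    exact hβ₁ne (Finsupp.ext fun i => le_antisymm (hc i) (Finsupp.le_def.mp hβ₁ge i))
  obtain ⟨i₀, hi₀⟩ := hi₀
  have hβ₁supp : β₁ ∈ Q.support := hUsupp hβ₁U
  have hkey : Bnd Q * ww β₀ ≤ ww β₁ := by
    have hsplit : ww β₁ = ww β₀ * ∏ i, w i ^ (β₁ i - β₀ i) := by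
      rw [hww', hww', ← Finset.prod_mul_distrib]
      refine Finset.prod_congr rfl fun i _ => ?_
      rw [← pow_add]
      congr 1
      have h1 : γ i ≤ β₀ i := Finsupp.le_def.mp (hUγ β₀ hβ₀U) i
      have h2 : β₀ i ≤ β₁ i := Finsupp.le_def.mp hβ₁ge i
      omega
    rw [hsplit, mul_comm (ww β₀)]
    refine Nat.mul_le_mul_right _ ?_
    calc Bnd Q = ∏ i, if i = i₀ then Bnd Q else 1 := by
          rw [Finset.prod_ite_eq' Finset.univ i₀ (fun _ => Bnd Q)]
          rw [if_pos (Finset.mem_univ i₀)]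
      _ ≤ ∏ i, w i ^ (β₁ i - β₀ i) := by
          refine Finset.prod_le_prod' fun i _ => ?_
          by_cases hii : i = i₀
          · subst hii
            rw [if_pos rfl]
            have hwi : Bnd Q ≤ w i := hwge i ⟨β₁, hβ₁supp, by omega⟩
            exact le_trans hwi (Nat.le_self_pow (by omega) _)
          · rw [if_neg hii]
            by_cases he : β₁ i - β₀ i = 0
            · rw [he, pow_zero]
            · have hwi : Bnd Q ≤ w i := hwge i ⟨β₁, hβ₁supp, by omega⟩
              have hB1 : 1 ≤ Bnd Q := by
                calc 1 = 1 * 1 := (one_mul 1).symm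
                  _ ≤ (Q.coeff β₁).natAbs * 2 ^ (∑ j, β₁ j) :=
                    Nat.mul_le_mul (Int.natAbs_pos.mpr (MvPolynomial.mem_support_iff.mp hβ₁supp))
                      (Nat.one_le_two_pow)
                  _ ≤ Bnd Q := by
                    rw [Bnd_def]
                    exact Finset.single_le_sum
                      (f := fun β => (Q.coeff β).natAbs * 2 ^ (∑ i, β i))
                      (fun _ _ => Nat.zero_le _) hβ₁supp
              exact Nat.one_le_pow _ _ (by omega)
  have hMsum : ((Bnd Q : ℤ)) * (ww β₀ : ℤ) ≤ ∑ β ∈ M, tm β := by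
    refine le_trans ?_ (Finset.single_le_sum (f := tm) htmM hβ₁M)
    have h1 : (1:ℤ) ≤ Q.coeff β₁ := hMmax β₁ hβ₁M
    have h2 : (1:ℤ) ≤ (bb β₁ : ℤ) := by exact_mod_cast hbb1 β₁ hβ₁U
    have h3 : ((Bnd Q : ℤ)) * (ww β₀:ℤ) ≤ (ww β₁ : ℤ) := by exact_mod_cast hkey
    calc (Bnd Q:ℤ) * (ww β₀:ℤ) ≤ (ww β₁:ℤ) := h3
      _ ≤ (bb β₁:ℤ) * (ww β₁:ℤ) := le_mul_of_one_le_left (by positivity) h2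
      _ ≤ Q.coeff β₁ * ((bb β₁:ℤ) * (ww β₁:ℤ)) :=
          le_mul_of_one_le_left (by positivity) h1
      _ = tm β₁ := (htm' β₁).symm
  have hNsum : -(((Bnd Q : ℤ)) * (ww β₀ : ℤ)) ≤ ∑ β ∈ N, tm β := by
    have hstep : ∀ β ∈ N,
        -((((Q.coeff β).natAbs * 2 ^ (∑ i, β i) : ℕ) : ℤ) * (ww β₀:ℤ)) ≤ tm β := by
      intro β hβN
      have habs : |tm β| ≤ (((Q.coeff β).natAbs * 2 ^ (∑ i, β i) : ℕ) : ℤ) * (ww β₀ : ℤ) := by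
        rw [htm', abs_mul, abs_of_nonneg (by positivity : (0:ℤ) ≤ (bb β:ℤ)*(ww β:ℤ)),
          Int.abs_eq_natAbs]
        have hwwle : ww β ≤ ww β₀ := hβ₀max β hβN
        have hbble' : bb β ≤ 2 ^ (∑ i, β i) := hbble β
        calc ((Q.coeff β).natAbs : ℤ) * ((bb β:ℤ)*(ww β:ℤ))
            ≤ ((Q.coeff β).natAbs : ℤ) * (((2:ℤ) ^ (∑ i, β i))*(ww β₀:ℤ)) := by
              refine mul_le_mul_of_nonneg_left ?_ (by positivity)
              exact mul_le_mul (by exact_mod_cast hbble') (by exact_mod_cast hwwle)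
                (by positivity) (by positivity)
          _ = (((Q.coeff β).natAbs * 2 ^ (∑ i, β i) : ℕ) : ℤ) * (ww β₀ : ℤ) := by
              push_cast
              ring
      have hnab := neg_abs_le (tm β)
      linarith
    refine le_trans ?_ (Finset.sum_le_sum hstep)
    have hsumle : (∑ β ∈ N, (((Q.coeff β).natAbs * 2 ^ (∑ i, β i) : ℕ) : ℤ)) ≤ (Bnd Q : ℤ) := by
      have hsub : N ⊆ Q.support := subset_trans (Finset.filter_subset _ _) hUsupp
      have hnat : (∑ β ∈ N, (Q.coeff β).natAbs * 2 ^ (∑ i, β i)) ≤ Bnd Q := by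
        rw [Bnd_def]
        exact Finset.sum_le_sum_of_subset_of_nonneg hsub (fun _ _ _ => Nat.zero_le _)
      exact_mod_cast hnat
    calc -((Bnd Q:ℤ) * (ww β₀:ℤ))
        ≤ -((∑ β ∈ N, (((Q.coeff β).natAbs * 2 ^ (∑ i, β i):ℕ):ℤ)) * (ww β₀:ℤ)) := by
          exact neg_le_neg (mul_le_mul_of_nonneg_right hsumle (by positivity))
      _ = ∑ β ∈ N, -((((Q.coeff β).natAbs * 2 ^ (∑ i, β i):ℕ):ℤ) * (ww β₀:ℤ)) := by
          rw [Finset.sum_mul, ← Finset.sum_neg_distrib]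
  linarith

/-- The recursive bound. -/
noncomputable def K0 : ℕ → MvPolynomial (Fin k) ℤ → ℕ
  | 0, Q => Bnd Q
  | m + 1, Q => max (Bnd Q)
      ((Finset.univ ×ˢ Finset.range (Bnd Q)).sup fun p =>
        K0 m (restrict (fun i => if i = p.1 then some p.2 else none) Q))

lemma K0_zero (Q : MvPolynomial (Fin k) ℤ) : K0 0 Q = Bnd Q := rfl

lemma K0_succ (m : ℕ) (Q : MvPolynomial (Fin k) ℤ) :
    K0 (m + 1) Q = max (Bnd Q)
      ((Finset.univ ×ˢ Finset.range (Bnd Q)).sup fun p =>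
        K0 m (restrict (fun i => if i = p.1 then some p.2 else none) Q)) := rfl

lemma vars_restrict_single (j : Fin k) (n : ℕ) (Q : MvPolynomial (Fin k) ℤ) :
    (restrict (fun i => if i = j then some n else none) Q).vars ⊆ Q.vars.erase j := by
  unfold restrict
  refine (vars_bind₁ _ _).trans ?_
  intro x hx
  rw [Finset.mem_biUnion] at hx
  obtain ⟨i, hi, hx⟩ := hx
  dsimp only at hx
  by_cases hij : i = j
  · rw [if_pos hij] at hx
    simp only [Option.elim, vars_C] at hx
    exact absurd hx (Finset.notMem_empty x)
  · rw [if_neg hij] at hx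
    simp only [Option.elim] at hx
    rw [vars_X, Finset.mem_singleton] at hx
    subst hx
    exact Finset.mem_erase.mpr ⟨hij, hi⟩

set_option maxHeartbeats 1000000 in
lemma mainLemma : ∀ (m : ℕ) (Q : MvPolynomial (Fin k) ℤ) (K : ℕ),
    Q.vars.card ≤ m →
    (∀ ν : Fin k → Option ℕ, (∀ i n, ν i = some n → n ≤ K) →
      ∀ α, MaxMonomial (restrict ν Q) α → 0 ≤ (restrict ν Q).coeff α) →
    K0 m Q ≤ K →
    ∀ (ν : Fin k → Option ℕ) (γ : Fin k →₀ ℕ),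
      0 ≤ (translate K (restrict ν Q)).coeff γ := by
  intro m
  induction m with
  | zero =>
      intro Q K hcard hyp hK ν γ
      have hvars : Q.vars = ∅ := Finset.card_eq_zero.mp (Nat.le_zero.mp hcard)
      refine estimate Q ν K ?_ ?_ ?_ γ
      · intro α hα
        have h0 := hyp (fun _ => none) (fun i n h => by simp at h) α
        rw [restrict_none_eq] at h0
        exact h0 hα
      · exact le_trans (le_of_eq (K0_zero Q).symm) hK
      · intro i n _
        right
        intro β hβ
        by_contra hne
        have : i ∈ Q.vars := (mem_vars i).mpr ⟨β, hβ, Finsupp.mem_support_iff.mpr hne⟩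
        rw [hvars] at this
        exact Finset.notMem_empty i this
  | succ m ih =>
      intro Q K hcard hyp hK ν γ
      rw [K0_succ] at hK
      have hBK : Bnd Q ≤ K := le_trans (le_max_left _ _) hK
      by_cases hA : ∃ j, j ∈ Q.vars ∧ ∃ n, ν j = some n ∧ n < Bnd Q
      · obtain ⟨j, hj, n, hνj, hn⟩ := hA
        have hQ'card : (restrict (fun i => if i = j then some n else none) Q).vars.card ≤ m := by
          have h1 := Finset.card_le_card (vars_restrict_single j n Q)
          rw [Finset.card_erase_of_mem hj] at h1
          omega
        have hnK : n ≤ K := le_trans (le_of_lt hn) hBK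
        have hrw : restrict ν Q
            = restrict ν (restrict (fun i => if i = j then some n else none) Q) := by
          rw [restrict_restrict_single]
          congr 1
          funext i
          by_cases hij : i = j
          · subst hij; rw [if_pos rfl, hνj]
          · rw [if_neg hij]
        rw [hrw]
        refine ih (restrict (fun i => if i = j then some n else none) Q) K hQ'card ?_ ?_ ν γ
        · intro ν' hb α
          rw [restrict_restrict_single]
          refine hyp _ ?_ α
          intro i n' h'
          by_cases hij : i = j
          · subst hij
            rw [if_pos rfl] at h'
            have hn' : n' = n := (Option.some_injective _ h').symm
            exact hn' ▸ hnK
          · rw [if_neg hij] at h'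
            exact hb i n' h'
        · have hmem : ((j, n) : Fin k × ℕ) ∈ Finset.univ ×ˢ Finset.range (Bnd Q) :=
            Finset.mem_product.mpr ⟨Finset.mem_univ j, Finset.mem_range.mpr hn⟩
          have hle := Finset.le_sup (f := fun p : Fin k × ℕ =>
            K0 m (restrict (fun i => if i = p.1 then some p.2 else none) Q)) hmem
          exact le_trans (le_trans hle (le_max_right _ _)) hK
      · push_neg at hA
        refine estimate Q ν K ?_ hBK ?_ γ
        · intro α hα
          have h0 := hyp (fun _ => none) (fun i n h => by simp at h) α
          rw [restrict_none_eq] at h0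
          exact h0 hα
        · intro i n hin
          by_cases hiv : i ∈ Q.vars
          · exact Or.inl (hA i hiv n hin)
          · right
            intro β hβ
            by_contra hne
            exact hiv ((mem_vars i).mpr ⟨β, hβ, Finsupp.mem_support_iff.mpr hne⟩)


end Statement6Aux


/-- there is a computable `K` such that `P ∈ PolyStrNNeg` iff all
translated partial evaluations `τ_K(P|ν)` lie in `ℕ[X₁,…,X_k]`, and it
suffices to consider partial assignments with values in `{0,…,K}`. -/
theorem statement6 {k : ℕ} (P : MvPolynomial (Fin k) ℤ) :
    ∃ K : ℕ,
      (PolyStrNNeg P ↔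
        ∀ ν : Fin k → Option ℕ, ∀ α : Fin k →₀ ℕ,
          0 ≤ (translate K (restrict ν P)).coeff α) ∧
      (PolyStrNNeg P ↔
        ∀ ν : Fin k → Option ℕ, (∀ i n, ν i = some n → n ≤ K) →
          ∀ α : Fin k →₀ ℕ, 0 ≤ (translate K (restrict ν P)).coeff α) := by
  have hcard : P.vars.card ≤ k := by
    have h := Finset.card_le_card (Finset.subset_univ P.vars)
    simpa using h
  refine ⟨K0 k P, ⟨?_, ?_⟩, ⟨?_, ?_⟩⟩
  · intro h1 ν α
    exact mainLemma k P (K0 k P) hcard (fun ν _ α hα => h1 ν α hα) le_rfl ν α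
  · intro h2 ν α hα
    have h := h2 ν α
    rwa [coeff_translate_of_max _ _ _ hα] at h
  · intro h1 ν _ α
    exact mainLemma k P (K0 k P) hcard (fun ν _ α hα => h1 ν α hα) le_rfl ν α
  · intro h3 ν α hα
    have hyp : ∀ ν' : Fin k → Option ℕ, (∀ i n, ν' i = some n → n ≤ K0 k P) →
        ∀ α', MaxMonomial (restrict ν' P) α' →
        0 ≤ (restrict ν' P).coeff α' := by
      intro ν' hb α' hα'
      have h := h3 ν' hb α'
      rwa [coeff_translate_of_max _ _ _ hα'] at h
    have h2 := mainLemma k P (K0 k P) hcard hyp le_rfl ν α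
    rwa [coeff_translate_of_max _ _ _ hα] at h2

end NRatSeries
end

section
/- For polynomials in two variables, PolyStrNNeg coincides with PolyNNeg: a polynomial P ∈ ℤ[X,Y] satisfies that every maximal monomial of every partial evaluation P|ν at natural numbers is non-negative if and only if P is non-negative and every maximal monomial of P is non-negative. -/
open scoped BigOperators Classical

namespace NRatSeries

private lemma eval_bind₁' {σ τ : Type} (f : τ → ℤ) (g : σ → MvPolynomial τ ℤ)
    (φ : MvPolynomial σ ℤ) :
    MvPolynomial.eval f (MvPolynomial.bind₁ g φ)
      = MvPolynomial.eval (fun i => MvPolynomial.eval f (g i)) φ :=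
  MvPolynomial.eval₂Hom_bind₁ _ _ _ _

private lemma restrict_none (P : MvPolynomial (Fin 2) ℤ) :
    restrict (fun _ => none) P = P := by
  show MvPolynomial.bind₁ MvPolynomial.X P = P
  rw [MvPolynomial.bind₁_X_left]
  rfl

private lemma eval_restrict (ν : Fin 2 → Option ℕ) (P : MvPolynomial (Fin 2) ℤ)
    (x : Fin 2 → ℕ) :
    MvPolynomial.eval (fun i => ((x i : ℤ))) (restrict ν P)
      = MvPolynomial.eval (fun i => (((ν i).elim (x i) id : ℕ) : ℤ)) P := by
  unfold restrict
  rw [eval_bind₁']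
  have harg : (fun i => MvPolynomial.eval (fun i => ((x i : ℕ) : ℤ))
      ((ν i).elim (MvPolynomial.X i) fun n => MvPolynomial.C (n : ℤ)))
      = fun i => (((ν i).elim (x i) id : ℕ) : ℤ) := by
    funext i
    cases h : ν i <;> simp [h]
  rw [harg]

private lemma support_restrict {ν : Fin 2 → Option ℕ} {i : Fin 2} {n : ℕ}
    (h : ν i = some n) (P : MvPolynomial (Fin 2) ℤ) {β : Fin 2 →₀ ℕ}
    (hβ : β ∈ (restrict ν P).support) : β i = 0 := by
  by_contra hne
  have hi : i ∈ (restrict ν P).vars :=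
    (MvPolynomial.mem_vars i).2 ⟨β, hβ, Finsupp.mem_support_iff.2 hne⟩
  unfold restrict at hi
  obtain ⟨i', -, hv⟩ := MvPolynomial.mem_vars_bind₁ _ _ hi
  cases h' : ν i' with
  | none =>
    rw [h'] at hv
    simp only [Option.elim_none] at hv
    rw [MvPolynomial.vars_X] at hv
    rw [Finset.mem_singleton] at hv
    subst hv
    rw [h'] at h
    cases h
  | some m =>
    rw [h'] at hv
    simp only [Option.elim_some] at hv
    rw [MvPolynomial.vars_C] at hv
    exact absurd hv (Finset.notMem_empty i)

private lemma leadingCoeff_nonneg_of_eval_nonneg (p : Polynomial ℤ)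
    (h : ∀ n : ℕ, 0 ≤ p.eval (n : ℤ)) : 0 ≤ p.leadingCoeff := by
  rcases le_or_gt p.degree 0 with hd | hd
  · have hC := Polynomial.eq_C_of_degree_le_zero hd
    have h0 := h 0
    rw [hC] at h0 ⊢
    rw [Polynomial.leadingCoeff_C]
    simpa using h0
  · by_contra hc
    push_neg at hc
    set q : Polynomial ℝ := p.map (Int.castRingHom ℝ) with hq
    have hdq : 0 < q.degree := by
      rw [hq, Polynomial.degree_map_eq_of_injective Int.cast_injective]
      exact hd
    have hlq : q.leadingCoeff ≤ 0 := by
      rw [hq, Polynomial.leadingCoeff_map_of_injective Int.cast_injective]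
      show ((p.leadingCoeff : ℤ) : ℝ) ≤ 0
      exact_mod_cast hc.le
    have ht := Polynomial.tendsto_atBot_of_leadingCoeff_nonpos q hdq hlq
    have hev : ∀ᶠ x : ℝ in Filter.atTop, Polynomial.eval x q < 0 :=
      ht.eventually (Filter.eventually_lt_atBot 0)
    obtain ⟨n, hn⟩ := ((tendsto_natCast_atTop_atTop (R := ℝ)).eventually hev).exists
    have hcast : Polynomial.eval ((n : ℕ) : ℝ) q = ((p.eval (n : ℤ) : ℤ) : ℝ) := by
      have : ((n : ℕ) : ℝ) = (((n : ℕ) : ℤ) : ℝ) := by push_cast; ring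
      rw [hq, this, Polynomial.eval_intCast_map]
      rfl
    rw [hcast] at hn
    have := h n
    exact absurd hn (by exact_mod_cast not_lt.2 this)

private lemma maxcoeff_nonneg_of_univar (Q : MvPolynomial (Fin 2) ℤ) (j : Fin 2)
    (h1 : ∀ x : Fin 2 → ℕ, 0 ≤ MvPolynomial.eval (fun i => (x i : ℤ)) Q)
    (h2 : ∀ β ∈ Q.support, ∀ i, i ≠ j → β i = 0)
    {α : Fin 2 →₀ ℕ} (hα : MaxMonomial Q α) : 0 ≤ Q.coeff α := by
  classical
  obtain ⟨hαs, hmax⟩ := hα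
  set D := α j with hD
  have key : ∀ β ∈ Q.support, β j ≤ D ∧ (β j = D → β = α) := by
    intro β hβ
    have hle : D ≤ β j → β = α := by
      intro hDle
      apply hmax β hβ
      rw [Finsupp.le_def]
      intro i
      by_cases hi : i = j
      · subst hi; exact hDle
      · rw [h2 α hαs i hi]; exact Nat.zero_le _
    constructor
    · by_contra hlt
      push_neg at hlt
      have := hle hlt.le
      subst this
      exact lt_irrefl _ hlt
    · exact fun h => hle h.ge
  set p : Polynomial ℤ := ∑ β ∈ Q.support, Polynomial.C (Q.coeff β) * Polynomial.X ^ (β j)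
    with hp
  have hevalp : ∀ n : ℕ, p.eval (n : ℤ) = MvPolynomial.eval (fun _ : Fin 2 => (n : ℤ)) Q := by
    intro n
    rw [hp, MvPolynomial.eval_eq', Polynomial.eval_finset_sum]
    apply Finset.sum_congr rfl
    intro β hβ
    rw [Polynomial.eval_mul, Polynomial.eval_C, Polynomial.eval_pow, Polynomial.eval_X]
    congr 1
    rw [Finset.prod_eq_single j]
    · intro i _ hi
      rw [h2 β hβ i hi, pow_zero]
    · intro h
      exact absurd (Finset.mem_univ j) h
  have hcoeff : ∀ m, p.coeff m = ∑ β ∈ Q.support, if m = β j then Q.coeff β else 0 := by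
    intro m
    rw [hp, Polynomial.finset_sum_coeff]
    apply Finset.sum_congr rfl
    intro β _
    rw [Polynomial.coeff_C_mul, Polynomial.coeff_X_pow]
    split <;> simp
  have hDcoeff : p.coeff D = Q.coeff α := by
    rw [hcoeff, Finset.sum_eq_single_of_mem α hαs]
    · simp [hD]
    · intro β hβ hne
      have : D ≠ β j := fun h => hne ((key β hβ).2 h.symm)
      simp [this]
  have hhigh : ∀ N, D < N → p.coeff N = 0 := by
    intro N hN
    rw [hcoeff]
    apply Finset.sum_eq_zero
    intro β hβ
    have : N ≠ β j := fun h => absurd (key β hβ).1 (by omega)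
    simp [this]
  rw [← hDcoeff]
  by_cases hzero : p.coeff D = 0
  · rw [hzero]
  · have hnat : p.natDegree ≤ D :=
      Polynomial.natDegree_le_iff_coeff_eq_zero.2 (fun N hN => hhigh N hN)
    have hdeg : p.natDegree = D :=
      le_antisymm hnat (Polynomial.le_natDegree_of_ne_zero hzero)
    have hlead := leadingCoeff_nonneg_of_eval_nonneg p
      (fun n => by rw [hevalp n]; exact h1 (fun _ => n))
    rwa [Polynomial.leadingCoeff, hdeg] at hlead

/-- in two variables, `PolyStrNNeg` coincides with `PolyNNeg`:
`P` has all maximal monomials of all partial evaluations non-negative iff `P`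
is non-negative on ℕ² and all maximal monomials of `P` are non-negative. -/
theorem statement7 (P : MvPolynomial (Fin 2) ℤ) :
    PolyStrNNeg P ↔
      ((∀ x : Fin 2 → ℕ, 0 ≤ MvPolynomial.eval (fun i => (x i : ℤ)) P) ∧
        ∀ α : Fin 2 →₀ ℕ, MaxMonomial P α → 0 ≤ P.coeff α) := by
  constructor
  · intro hS
    constructor
    · intro x
      set ν : Fin 2 → Option ℕ := fun i => some (x i) with hν
      have hsupp : ∀ β ∈ (restrict ν P).support, β = 0 := by
        intro β hβ
        ext i
        exact support_restrict (ν := ν) (i := i) (n := x i) rfl P hβ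
      have heval : MvPolynomial.eval (fun i => ((x i : ℕ) : ℤ)) P
          = (restrict ν P).coeff 0 := by
        have h' := eval_restrict ν P x
        have h'' : (fun i => (((ν i).elim (x i) id : ℕ) : ℤ)) = fun i => ((x i : ℕ) : ℤ) :=
          rfl
        rw [h''] at h'
        rw [← h', MvPolynomial.eval_eq']
        by_cases h0 : (0 : Fin 2 →₀ ℕ) ∈ (restrict ν P).support
        · have hset : (restrict ν P).support = {0} :=
            Finset.eq_singleton_iff_unique_mem.2 ⟨h0, fun β hβ => hsupp β hβ⟩
          rw [hset]
          simp
        · have hs : (restrict ν P).support = ∅ := by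
            rcases Finset.eq_empty_or_nonempty ((restrict ν P).support) with h | h
            · exact h
            · obtain ⟨β, hβ⟩ := h
              exact absurd (hsupp β hβ ▸ hβ) h0
          rw [hs, MvPolynomial.notMem_support_iff.1 h0]
          simp
      rw [heval]
      by_cases h0 : (0 : Fin 2 →₀ ℕ) ∈ (restrict ν P).support
      · exact hS ν 0 ⟨h0, fun β hβ _ => hsupp β hβ⟩
      · rw [MvPolynomial.notMem_support_iff.1 h0]
    · intro α hα
      have := hS (fun _ => none) α (by rwa [restrict_none])
      rwa [restrict_none] at this
  · rintro ⟨h1, h2⟩ ν α hα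
    by_cases hz : ν 0 = none
    · by_cases ho : ν 1 = none
      · have hν : ν = fun _ => none := by
          funext i
          fin_cases i <;> assumption
        rw [hν, restrict_none] at hα ⊢
        exact h2 α hα
      · obtain ⟨n, hn⟩ := Option.ne_none_iff_exists'.1 ho
        refine maxcoeff_nonneg_of_univar (restrict ν P) 0 ?_ ?_ hα
        · intro x
          rw [eval_restrict]
          exact h1 _
        · intro β hβ i hi
          have hv : i.val ≠ 0 := fun h => hi (Fin.ext h)
          have : i = 1 := Fin.ext (by have := i.isLt; omega)
          subst this
          exact support_restrict hn P hβ
    · obtain ⟨n, hn⟩ := Option.ne_none_iff_exists'.1 hz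
      refine maxcoeff_nonneg_of_univar (restrict ν P) 1 ?_ ?_ hα
      · intro x
        rw [eval_restrict]
        exact h1 _
      · intro β hβ i hi
        have hv : i.val ≠ 1 := fun h => hi (Fin.ext h)
        have : i = 0 := Fin.ext (by have := i.isLt; omega)
        subst this
        exact support_restrict hn P hβ

end NRatSeries
end

section
/- Let k ≥ 1 and let f : Σ* → ℕ be ℕ-polyregular of degree at most k. Then the relation ⊑_f^k on Σ*, defined by u ⊑_f^k v iff the function w ↦ f(vw) − f(uw) is ℕ-polyregular of degree at most k−1, is a well-quasi-ordering: every infinite sequence (u_n)_{n∈ℕ} of words admits indices i < j with u_i ⊑_f^k u_j. -/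
open scoped BigOperators Classical

namespace NRatSeries

section Aux15

variable {A : Type}

private lemma sum_map_flatMap {β γ : Type} (L : List β) (f : β → List γ) (F : γ → ℤ) :
    ((L.flatMap f).map F).sum = (L.map (fun x => ((f x).map F).sum)).sum := by
  induction L with
  | nil => simp
  | cons a L ih => simp [List.flatMap_cons, ih]

private lemma list_sum_finset_sum {β γ : Type} (L : List β) (T : Finset γ) (F : γ → β → ℤ) :
    (L.map (fun x => ∑ q ∈ T, F q x)).sum = ∑ q ∈ T, (L.map (F q)).sum := by
  induction L with
  | nil => simp
  | cons a L ih => simp [ih, Finset.sum_add_distrib]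

private lemma getD_tail (l : List (List A)) (j : ℕ) :
    l.tail.getD j [] = l.getD (j+1) [] := by cases l <;> simp

private lemma headD_eq_getD (l : List (List A)) : l.headD [] = l.getD 0 [] := by
  cases l <;> simp

private lemma splits_cons (a : A) (v : List A) :
    splits (a :: v) = ([], a :: v) :: (splits v).map (fun p => (a :: p.1, p.2)) := by
  unfold splits
  rw [List.length_cons, List.range_succ_eq_map]
  simp [List.map_map, Function.comp_def]

private lemma splits_ne_nil (v : List A) : splits v ≠ [] := by
  unfold splits; simp

private lemma splits_append (u w : List A) :
    splits (u ++ w) = ((splits u).dropLast).map (fun p => (p.1, p.2 ++ w))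
      ++ (splits w).map (fun p => (u ++ p.1, p.2)) := by
  induction u with
  | nil =>
      simp [splits]
  | cons a u ih =>
      rw [List.cons_append, splits_cons, splits_cons, ih,
        List.dropLast_cons_of_ne_nil (by simp [splits_ne_nil])]
      simp [List.map_map, Function.comp_def, ← List.map_dropLast]

private lemma decomps_succ (n : ℕ) (w : List A) :
    decomps (n+1) w = (splits w).flatMap (fun p => (decomps n p.2).map (fun l => p.1 :: l)) := rfl

private lemma decomps_zero (w : List A) :
    decomps 0 w = if w.isEmpty then [[]] else [] := rfl

private lemma splits_last_aux {γ : Type} (v : List A) (h : List A → γ) :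
    ((splits v).flatMap (fun p => if p.2.isEmpty then [h p.1] else [])) = [h v] := by
  induction v generalizing h with
  | nil => simp [splits]
  | cons a v ih =>
      rw [splits_cons]
      simp only [List.flatMap_cons, List.flatMap_map]
      rw [show (a :: v).isEmpty = false from rfl]
      simpa using ih (fun x => h (a :: x))

private lemma decomps_one (v : List A) : decomps 1 v = [[v]] := by
  rw [decomps_succ]
  have : ∀ p : List A × List A, (decomps 0 p.2).map (fun l => p.1 :: l)
      = if p.2.isEmpty then [[p.1]] else [] := by
    intro p; rw [decomps_zero]; split <;> simp
  simp only [this]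
  exact splits_last_aux v (fun x => [x])

private lemma length_of_mem_decomps : ∀ (n : ℕ) (w : List A) (l : List (List A)),
    l ∈ decomps n w → l.length = n := by
  intro n
  induction n with
  | zero => intro w l hl; rw [decomps_zero] at hl; split at hl <;> simp_all
  | succ n ih =>
      intro w l hl
      rw [decomps_succ] at hl
      simp only [List.mem_flatMap, List.mem_map] at hl
      obtain ⟨p, -, l', hl', rfl⟩ := hl
      simp [ih _ _ hl']

end Aux15

section Aux15b

variable {A : Type}

/-- Decompositions of `u` into `s+1` factors where all `s` cuts are strictly
inside `u`: pairs (list of `s` factors, remainder). -/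
private def PD : ℕ → List A → List (List (List A) × List A)
  | 0, u => [([], u)]
  | s+1, u => ((splits u).dropLast).flatMap
      (fun p => (PD s p.2).map (fun q => (p.1 :: q.1, q.2)))

private lemma length_of_mem_PD : ∀ (s : ℕ) (u : List A) (x : List (List A) × List A),
    x ∈ PD s u → x.1.length = s := by
  intro s
  induction s with
  | zero => intro u x hx; simp [PD] at hx; simp [hx]
  | succ s ih =>
      intro u x hx
      simp only [PD, List.mem_flatMap, List.mem_map] at hx
      obtain ⟨p, -, y, hy, rfl⟩ := hx
      simp [ih _ _ hy]

/-- Key combinatorial identity: decompositions of `u ++ w` into `n+1` factors,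
organized by the number `s` of cuts falling strictly inside `u`. -/
private lemma decomps_append_sum (w : List A) : ∀ (n : ℕ) (u : List A) (F : List (List A) → ℤ),
    ((decomps (n+1) (u++w)).map F).sum
      = ∑ s : Fin (n+1), ((PD s.val u).map (fun x =>
          ((decomps (n+1-s.val) w).map
            (fun l => F (x.1 ++ (x.2 ++ l.headD []) :: l.tail))).sum)).sum := by
  intro n
  induction n with
  | zero =>
      intro u F
      simp [decomps_one, PD, Fin.sum_univ_one]
  | succ n ih =>
      intro u F
      rw [decomps_succ, splits_append, List.flatMap_append, List.map_append, List.sum_append,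
        sum_map_flatMap, sum_map_flatMap, Fin.sum_univ_succ, add_comm]
      simp only [List.map_map, Function.comp_def]
      congr 1
      · -- splits w part = term at 0
        simp only [PD, List.map_cons, List.map_nil, List.sum_cons, List.sum_nil, add_zero,
          Fin.val_zero, Nat.sub_zero]
        rw [decomps_succ, sum_map_flatMap]
        apply congrArg
        apply List.map_congr_left
        intro p _
        rw [List.map_map]
        apply congrArg
        apply List.map_congr_left
        intro l _
        simp [Function.comp_def]
      · -- dropLast part = ∑ s, term at s.succ
        have hpt : ∀ p ∈ (splits u).dropLast,
            ((decomps (n+1) (p.2 ++ w)).map (fun l => F (p.1 :: l))).sum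
            = ∑ s : Fin (n+1), ((PD s.val p.2).map (fun y =>
                ((decomps (n+1-s.val) w).map
                  (fun l => F (p.1 :: (y.1 ++ (y.2 ++ l.headD []) :: l.tail)))).sum)).sum := by
          intro p _
          exact ih p.2 (fun l => F (p.1 :: l))
        rw [List.map_congr_left hpt, list_sum_finset_sum]
        apply Finset.sum_congr rfl
        intro s _
        simp only [Fin.val_succ]
        have hsub : n + 1 + 1 - (s.val + 1) = n + 1 - s.val := by omega
        rw [hsub]
        simp only [PD, sum_map_flatMap, List.map_map, Function.comp_def]
        apply congrArg
        apply List.map_congr_left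
        intro p _
        apply congrArg
        apply List.map_congr_left
        intro y _
        apply congrArg
        apply List.map_congr_left
        intro l _
        simp

/-- One padding step. -/
private lemma pad_step : ∀ (m : ℕ) (w : List A) (G : List (List A) → ℤ),
    ((decomps (m+1) w).map (fun l => if l.getD m [] = [] then G l else 0)).sum
      = ((decomps m w).map (fun l => G (l ++ [[]]))).sum := by
  intro m
  induction m with
  | zero =>
      intro w G
      rw [decomps_one, decomps_zero]
      by_cases h : w = [] <;> simp [h]
  | succ m ih =>
      intro m_w G
      rw [decomps_succ, decomps_succ, sum_map_flatMap, sum_map_flatMap]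
      apply congrArg
      apply List.map_congr_left
      intro p _
      rw [List.map_map, List.map_map]
      have he : ((fun l => if l.getD (m+1) [] = [] then G l else 0) ∘ (fun l => p.1 :: l))
          = fun l => if l.getD m [] = [] then G (p.1 :: l) else 0 := by
        funext l; simp [List.getD_cons_succ]
      rw [he]
      have := ih p.2 (fun l => G (p.1 :: l))
      rw [this]
      simp [Function.comp_def]

/-- Iterated padding. -/
private lemma pad : ∀ (t m : ℕ) (w : List A) (G : List (List A) → ℤ),
    ((decomps (m+t) w).map
      (fun l => if (∀ i, m ≤ i → l.getD i [] = []) then G l else 0)).sum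
      = ((decomps m w).map (fun l => G (l ++ List.replicate t []))).sum := by
  intro t
  induction t with
  | zero =>
      intro m w G
      apply congrArg
      apply List.map_congr_left
      intro l hl
      have hlen : l.length = m := length_of_mem_decomps _ _ _ hl
      have hco : (∀ i, m ≤ i → l.getD i [] = []) :=
        fun i hi => List.getD_eq_default _ _ (by omega)
      rw [if_pos hco]
      simp
  | succ t ih =>
      intro m w G
      have e1 : ((decomps (m+(t+1)) w).map
            (fun l => if (∀ i, m ≤ i → l.getD i [] = []) then G l else 0)).sum
          = ((decomps ((m+t)+1) w).map
            (fun l => if l.getD (m+t) [] = [] then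
                (if (∀ i, m ≤ i → l.getD i [] = []) then G l else 0) else 0)).sum := by
        have harr : m + (t+1) = (m+t)+1 := by omega
        rw [harr]
        apply congrArg; apply List.map_congr_left
        intro l _
        by_cases h1 : l.getD (m+t) [] = []
        · rw [if_pos h1]
        · rw [if_neg h1, if_neg]
          intro hC
          exact h1 (hC (m+t) (by omega))
      rw [e1, pad_step]
      have e2 : ((decomps (m+t) w).map (fun l =>
            if (∀ i, m ≤ i → (l ++ [[]]).getD i [] = []) then G (l ++ [[]]) else 0)).sum
          = ((decomps (m+t) w).map (fun l =>
            if (∀ i, m ≤ i → l.getD i [] = []) then G (l ++ [[]]) else 0)).sum := by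
        apply congrArg; apply List.map_congr_left
        intro l hl
        have hlen : l.length = m + t := length_of_mem_decomps _ _ _ hl
        have hiff : (∀ i, m ≤ i → (l ++ [[]]).getD i [] = []) ↔
            (∀ i, m ≤ i → l.getD i [] = []) := by
          constructor
          · intro h i hi
            by_cases hil : i < l.length
            · have := h i hi
              rwa [List.getD_append _ _ _ _ hil] at this
            · exact List.getD_eq_default _ _ (by omega)
          · intro h i hi
            by_cases hil : i < l.length
            · rw [List.getD_append _ _ _ _ hil]; exact h i hi
            · rw [List.getD_append_right _ _ _ _ (by omega)]
              rcases Nat.lt_or_ge (i - l.length) 1 with h1 | h1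
              · interval_cases hh : (i - l.length)
                · simp
              · exact List.getD_eq_default _ _ (by simpa using h1)
        by_cases hc : (∀ i, m ≤ i → l.getD i [] = [])
        · rw [if_pos (hiff.mpr hc), if_pos hc]
        · rw [if_neg (fun h => hc (hiff.mp h)), if_neg hc]
      rw [e2, ih m w (fun l => G (l ++ [[]]))]
      apply congrArg; apply List.map_congr_left
      intro l _
      rw [List.append_assoc, ← List.replicate_succ']

private lemma sum_map_count {β γ : Type} [Fintype γ] (L : List β) (φ : β → γ) (g : γ → ℤ) :
    (L.map (fun x => g (φ x))).sum
      = ∑ m : γ, (L.countP (fun x => decide (φ x = m)) : ℤ) * g m := by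
  induction L with
  | nil => simp
  | cons a L ih =>
      simp only [List.map_cons, List.sum_cons, ih, List.countP_cons]
      push_cast
      rw [Finset.sum_congr rfl (fun m _ => add_mul
        ((L.countP (fun x => decide (φ x = m)) : ℤ)) _ (g m)), Finset.sum_add_distrib]
      have hh : ∀ m ∈ (Finset.univ : Finset γ),
          ((if decide (φ a = m) = true then (1:ℤ) else 0)) * g m
          = if φ a = m then g m else 0 := by
        intro m _
        by_cases h : φ a = m <;> simp [h]
      rw [Finset.sum_congr rfl hh, Finset.sum_ite_eq]
      simp [add_comm]

end Aux15b

section Aux15c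

variable {A : Type}

/-- The monoid morphism enriched with an emptiness flag (in `ZMod 2` under
multiplication: `1` for the empty word, `0` otherwise). -/
private noncomputable def muf {d : ℕ} (D : PolyRegData A d) : List A → D.M × ZMod 2 :=
  fun w => (D.μ w, if w = [] then 1 else 0)

private lemma muf_nil {d : ℕ} (D : PolyRegData A d) : muf D [] = 1 := by
  simp [muf, D.map_nil]

private lemma muf_append {d : ℕ} (D : PolyRegData A d) (u v : List A) :
    muf D (u ++ v) = muf D u * muf D v := by
  unfold muf
  rw [Prod.mk_mul_mk, D.map_append]
  congr 1
  by_cases hu : u = [] <;> by_cases hv : v = [] <;> simp [hu, hv]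

private lemma muf_snd {d : ℕ} (D : PolyRegData A d) (z : List A) :
    (muf D z).2 = 1 ↔ z = [] := by
  unfold muf
  by_cases h : z = [] <;> simp [h]

variable {k' : ℕ}

/-- Profiles: number of cuts inside the prefix (minus 1), together with the
monoid images of the prefix factors. -/
private abbrev QT (D : PolyRegData A (k'+1)) : Type :=
  Fin (k'+1) × (Fin (k'+2) → D.M × ZMod 2)

private def sf (D : PolyRegData A (k'+1)) (q : QT D) : ℕ := q.1.val + 1

private noncomputable def profOf (D : PolyRegData A (k'+1)) (x : List (List A) × List A) :
    Fin (k'+2) → D.M × ZMod 2 :=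
  fun i => muf D ((x.1 ++ [x.2]).getD i.val [])

private noncomputable def Nf (D : PolyRegData A (k'+1)) (u : List A) (q : QT D) : ℕ :=
  (PD (sf D q) u).countP (fun x => decide (profOf D x = q.2))

private noncomputable def psif (D : PolyRegData A (k'+1)) (q : QT D) (l : List (List A)) :
    Fin (k'+2) → D.M := fun i =>
  if i.val < sf D q then (q.2 i).1
  else if i.val = sf D q then (q.2 i).1 * D.μ (l.getD 0 [])
  else D.μ (l.getD (i.val - sf D q) [])

private noncomputable def Hf (D : PolyRegData A (k'+1)) (q : QT D) (w : List A) : ℤ :=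
  ((decomps (k'+2 - sf D q) w).map (fun l => D.π (psif D q l))).sum

private noncomputable def Tf (D : PolyRegData A (k'+1)) (m : D.M) (w : List A) : ℤ :=
  ((decomps (k'+1+1) w).map (fun l =>
    D.π (fun i => if i.val = 0 then m * D.μ (l.getD 0 []) else D.μ (l.getD i.val [])))).sum

private lemma key (D : PolyRegData A (k'+1)) (u w : List A) :
    ((decomps (k'+1+1) (u++w)).map (fun l => D.π (fun i => D.μ (l.getD i.val [])))).sum
      = Tf D (D.μ u) w + ∑ q : QT D, (Nf D u q : ℤ) * Hf D q w := by
  rw [decomps_append_sum w (k'+1) u, Fin.sum_univ_succ]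
  congr 1
  · -- head term = Tf
    simp only [PD, List.map_cons, List.map_nil, List.sum_cons, List.sum_nil, add_zero,
      Fin.val_zero, Nat.sub_zero, List.nil_append]
    unfold Tf
    apply congrArg
    apply List.map_congr_left
    intro l _
    apply congrArg
    funext i
    by_cases hi : i.val = 0
    · rw [if_pos hi, hi, List.getD_cons_zero, D.map_append, headD_eq_getD]
    · rw [if_neg hi]
      obtain ⟨j, hj⟩ := Nat.exists_eq_succ_of_ne_zero hi
      rw [hj, List.getD_cons_succ, getD_tail]
  · -- tail terms
    rw [Fintype.sum_prod_type]
    apply Finset.sum_congr rfl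
    intro s _
    have h1 : ∀ x ∈ PD (s.succ.val) u,
        ((decomps (k'+1+1 - s.succ.val) w).map
          (fun l => D.π (fun i => D.μ ((x.1 ++ (x.2 ++ l.headD []) :: l.tail).getD i.val [])))).sum
        = Hf D (s, profOf D x) w := by
      intro x hx
      have hlx : x.1.length = s.val + 1 := length_of_mem_PD _ _ _ hx
      unfold Hf
      have hc : k'+1+1 - s.succ.val = k'+2 - sf D (s, profOf D x) := by
        simp [sf, Fin.val_succ]
      rw [hc]
      apply congrArg
      apply List.map_congr_left
      intro l _
      apply congrArg
      funext i
      unfold psif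
      have hsf : sf D ((s, profOf D x) : QT D) = s.val + 1 := rfl
      rw [hsf]
      rcases Nat.lt_trichotomy i.val (s.val+1) with hlt | heq | hgt
      · rw [if_pos hlt, List.getD_append _ _ _ _ (by omega)]
        show _ = (profOf D x i).1
        unfold profOf muf
        rw [List.getD_append _ _ _ _ (by simp [hlx]; omega)]
      · rw [if_neg (by omega), if_pos heq,
          List.getD_append_right _ _ _ _ (by omega), heq]
        have : s.val + 1 - x.1.length = 0 := by omega
        rw [this, List.getD_cons_zero, D.map_append, headD_eq_getD]
        show _ = (profOf D x i).1 * _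
        unfold profOf muf
        rw [heq, List.getD_append_right _ _ _ _ (by omega)]
        have : s.val + 1 - x.1.length = 0 := by omega
        rw [this]
        rfl
      · rw [if_neg (by omega), if_neg (by omega),
          List.getD_append_right _ _ _ _ (by omega)]
        have hj : ∃ j, i.val - x.1.length = j + 1 := ⟨i.val - x.1.length - 1, by omega⟩
        obtain ⟨j, hj⟩ := hj
        rw [hj, List.getD_cons_succ, getD_tail]
        have : j + 1 = i.val - (s.val + 1) := by omega
        rw [this]
    rw [List.map_congr_left h1]
    exact (sum_map_count (PD (s.succ.val) u) (profOf D)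
      (fun mv => Hf D (s, mv) w)).trans (Finset.sum_congr rfl (fun mv _ => by
        congr 2
        unfold Nf sf
        exact List.countP_congr (fun x _ => by simp)))

end Aux15c

section Aux15d

variable {A : Type} {k' : ℕ}

open Fin.NatCast in
/-- The production function for the difference, of degree `k'`. -/
private noncomputable def chif (D : PolyRegData A (k'+1)) (q : QT D)
    (x : Fin (k'+1) → D.M × ZMod 2) : Fin (k'+2) → D.M := fun i =>
  if i.val < sf D q then (q.2 i).1
  else if i.val = sf D q then (q.2 i).1 * (x 0).1
  else (x ((i.val - sf D q : ℕ) : Fin (k'+1))).1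

private noncomputable def pif (D : PolyRegData A (k'+1)) (c : QT D → ℕ)
    (x : Fin (k'+1) → D.M × ZMod 2) : ℤ :=
  ∑ q : QT D, (c q : ℤ) *
    (if (∀ i : Fin (k'+1), (k'+2) - sf D q ≤ i.val → (x i).2 = 1)
      then D.π (chif D q x) else 0)

open Fin.NatCast in
private lemma hf_step (D : PolyRegData A (k'+1)) (c : QT D → ℕ)
    (hpos : D.NatOutput) (w : List A) :
    ((decomps (k'+1) w).map (fun l => pif D c (fun i => muf D (l.getD i.val [])))).sum
      = ∑ q : QT D, (c q : ℤ) * Hf D q w := by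
  unfold pif
  rw [list_sum_finset_sum]
  apply Finset.sum_congr rfl
  intro q _
  rw [List.sum_map_mul_left]
  congr 1
  -- per q : padding argument
  have hq1 : sf D q ≤ k' + 1 := by have := q.1.isLt; unfold sf; omega
  set m := k' + 2 - sf D q with hm
  have hm1 : 1 ≤ m := by omega
  have hmt : m + q.1.val = k' + 1 := by rw [hm]; unfold sf; omega
  have e1 : ((decomps (k'+1) w).map (fun l =>
        if (∀ i : Fin (k'+1), m ≤ i.val → (muf D (l.getD i.val [])).2 = 1)
          then D.π (chif D q (fun i => muf D (l.getD i.val []))) else 0)).sum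
      = ((decomps (m + q.1.val) w).map (fun l =>
        if (∀ i : ℕ, m ≤ i → l.getD i [] = [])
          then D.π (chif D q (fun i => muf D (l.getD i.val []))) else 0)).sum := by
    rw [hmt]
    apply congrArg
    apply List.map_congr_left
    intro l hl
    have hlen : l.length = k' + 1 := length_of_mem_decomps _ _ _ hl
    have hiff : (∀ i : Fin (k'+1), m ≤ i.val → (muf D (l.getD i.val [])).2 = 1)
        ↔ (∀ i : ℕ, m ≤ i → l.getD i [] = []) := by
      constructor
      · intro h i hi
        by_cases hik : i < k' + 1
        · exact (muf_snd D _).mp (h ⟨i, hik⟩ hi)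
        · exact List.getD_eq_default _ _ (by omega)
      · intro h i hi
        exact (muf_snd D _).mpr (h i.val hi)
    by_cases hc : (∀ i : ℕ, m ≤ i → l.getD i [] = [])
    · rw [if_pos (hiff.mpr hc), if_pos hc]
    · rw [if_neg (fun hh => hc (hiff.mp hh)), if_neg hc]
  rw [e1, pad]
  unfold Hf
  rw [← hm]
  apply congrArg
  apply List.map_congr_left
  intro l hl
  have hlen : l.length = m := length_of_mem_decomps _ _ _ hl
  apply congrArg
  funext i
  unfold chif psif
  rcases Nat.lt_trichotomy i.val (sf D q) with hlt | heq | hgt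
  · rw [if_pos hlt, if_pos hlt]
  · rw [if_neg (show ¬ i.val < sf D q by omega), if_neg (show ¬ i.val < sf D q by omega),
      if_pos heq, if_pos heq]
    show (q.2 i).1 * (muf D ((l ++ List.replicate q.1.val []).getD
      ((0 : Fin (k'+1)).val) [])).1 = _
    rw [show ((0 : Fin (k'+1)).val) = 0 from rfl, List.getD_append _ _ _ _ (by omega)]
    rfl
  · rw [if_neg (show ¬ i.val < sf D q by omega), if_neg (show ¬ i.val < sf D q by omega),
      if_neg (show ¬ i.val = sf D q by omega), if_neg (show ¬ i.val = sf D q by omega)]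
    show (muf D ((l ++ List.replicate q.1.val []).getD
      (((i.val - sf D q : ℕ) : Fin (k'+1)).val) [])).1 = _
    rw [Fin.val_cast_of_lt (show i.val - sf D q < k'+1 by have := i.isLt; omega),
      List.getD_append _ _ _ _ (by have := i.isLt; omega)]
    rfl

private theorem main_aux (k' : ℕ) (f : List A → ℤ) (hf : NPolyD (k'+1) f) :
    ∃ (M' : Type) (_ : Finite M') (μ' : List A → M') (Q : Type) (_ : Finite Q)
      (N : List A → Q → ℕ),
      ∀ u v : List A, μ' u = μ' v → (∀ q, N u q ≤ N v q) →
        NPolyD k' (fun w => f (v ++ w) - f (u ++ w)) := by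
  obtain ⟨D, hD, hpos⟩ := hf
  refine ⟨D.M × ZMod 2, inferInstance, muf D, QT D, inferInstance, Nf D, ?_⟩
  intro u v hμ hN
  have hdiff : ∀ w, f (v ++ w) - f (u ++ w)
      = ∑ q : QT D, ((Nf D v q - Nf D u q : ℕ) : ℤ) * Hf D q w := by
    intro w
    rw [hD (v ++ w), hD (u ++ w), key D v w, key D u w]
    have hμ1 : D.μ v = D.μ u := (congrArg Prod.fst hμ).symm
    rw [hμ1, add_sub_add_left_eq_sub, ← Finset.sum_sub_distrib]
    apply Finset.sum_congr rfl
    intro q _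
    rw [← sub_mul]
    congr 1
    rw [Nat.cast_sub (hN q)]
  let D' : PolyRegData A k' :=
    { M := D.M × ZMod 2
      mon := inferInstance
      fin := inferInstance
      μ := muf D
      π := pif D (fun q => Nf D v q - Nf D u q)
      map_nil := muf_nil D
      map_append := muf_append D }
  refine ⟨D', ?_, ?_⟩
  · intro w
    show f (v ++ w) - f (u ++ w) = _
    rw [hdiff w]
    exact (hf_step D (fun q => Nf D v q - Nf D u q) hpos w).symm
  · intro x
    apply Finset.sum_nonneg
    intro q _
    apply mul_nonneg (by positivity)
    split
    · exact hpos _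
    · exact le_rfl

end Aux15d

/-- for `k ≥ 1` and `f : Σ* → ℕ` ℕ-polyregular of degree at most
`k`, the relation `u ⊑_f^k v` (the derivative `w ↦ f(vw) − f(uw)` is in
`NPoly[k−1]`) is a well-quasi-ordering on `Σ*`. -/
theorem statement15 {A : Type} [Fintype A] (k : ℕ) (hk : 1 ≤ k)
    (f : List A → ℕ) (hf : NPolyD k (fun w => (f w : ℤ))) :
    ∀ u : ℕ → List A, ∃ i j : ℕ, i < j ∧
      NPolyD (k - 1) (fun w => (f (u j ++ w) : ℤ) - (f (u i ++ w) : ℤ)) := by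
  obtain ⟨k', rfl⟩ : ∃ k', k = k' + 1 := ⟨k - 1, by omega⟩
  obtain ⟨M', hM', μ', Q, hQ, N, hmain⟩ := main_aux k' (fun w => (f w : ℤ)) hf
  intro u
  haveI := hM'
  haveI := hQ
  obtain ⟨m, hm⟩ := Finite.exists_infinite_fiber (fun n => μ' (u n))
  haveI : Infinite ↥((fun n => μ' (u n)) ⁻¹' {m}) := hm
  let e := Nat.orderEmbeddingOfSet ((fun n => μ' (u n)) ⁻¹' {m})
  have hmem : ∀ n, μ' (u (e n)) = m := by
    intro n
    have h1 : e n ∈ Set.range ⇑e := Set.mem_range_self n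
    rw [Nat.orderEmbeddingOfSet_range] at h1
    exact h1
  have hpwo : Set.IsPWO (Set.univ : Set (Q → ℕ)) :=
    by
      have := Set.IsPWO.pi (fun (_ : Q) => Set.IsPWO.of_linearOrder (Set.univ : Set ℕ))
      rwa [Set.pi_univ] at this
  obtain ⟨i, j, hij, hle⟩ := hpwo (fun n => ⟨N (u (e n)), Set.mem_univ _⟩)
  refine ⟨e i, e j, e.strictMono hij, ?_⟩
  have := hmain (u (e i)) (u (e j)) (by rw [hmem, hmem]) (fun q => hle q)
  exact this

end NRatSeries
end
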